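/- arXiv:1911.02342 — 6 statements merged into one kernel-verified Lean document; each statement's English description precedes it below -/
import Mathlib

section
/- Principle of meromorphic continuation: Let M be a nonempty connected open subset of ℂ^N and let E be a complex Banach space. Let ι be an index set and, for each i ∈ ι, let F_i be a complex Banach space, let μ_i : M → (E →L[ℂ] F_i) be analytic, and let c_i : M → F_i be analytic. For s ∈ M set Sol(s) = {v ∈ E : μ_i(s) v = c_i(s) for all i ∈ ι}. Assume the family of systems is locally of finite type: for every s₀ ∈ M there exist an open neighborhood W ⊆ M of s₀, an integer k ≥ 0 and analytic maps e_1, …, e_k : W → E such that Sol(s) ⊆ span_ℂ{e_1(s), …, e_k(s)} for every s ∈ W. Let M_unq = {s ∈ M : Sol(s) has exactly one element}, and for s ∈ M_unq let v(s) denote that element. If the interior of M_unq is nonempty, then there exists an open dense subset U of M with U ⊆ M_unq such that v is analytic at every point of U, and v is meromorphic on M in the following sense: for every s₀ ∈ M there exist a connected open neighborhood W of s₀ in M, an analytic function g : W → ℂ that is not identically zero, and an analytic map h : W → E, such that g(s)·v(s) = h(s) for all s ∈ U ∩ W. -/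
set_option linter.unusedSectionVars false
set_option linter.unusedVariables false

open Set Submodule Module Filter

section helpers

variable {G : Type*} [NormedAddCommGroup G] [NormedSpace ℂ G]

/-- Nonvanishing set of a not-identically-zero analytic function is dense. -/
lemma mero_dense_ne_zero {B : Set G} (hB : IsOpen B) (hBc : IsPreconnected B)
    {f : G → ℂ} (hf : AnalyticOnNhd ℂ f B) (hne : ∃ s ∈ B, f s ≠ 0) :
    B ⊆ closure {s | s ∈ B ∧ f s ≠ 0} := by
  intro s hs
  by_contra hcl
  obtain ⟨t, htB, htne⟩ := hne
  rw [_root_.mem_closure_iff] at hcl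
  push_neg at hcl
  obtain ⟨V, hVo, hsV, hVdisj⟩ := hcl
  have hz : f =ᶠ[nhds s] 0 := by
    have hmem : V ∩ B ∈ nhds s := (hVo.inter hB).mem_nhds ⟨hsV, hs⟩
    filter_upwards [hmem] with x hx
    by_contra hfx
    exact Set.eq_empty_iff_forall_notMem.1 hVdisj x ⟨hx.1, hx.2, hfx⟩
  exact htne (hf.eqOn_zero_of_preconnected_of_eventuallyEq_zero hBc hs hz htB)

lemma mero_dense_inter_open {B D O : Set G} (hO : IsOpen O) (hOB : O ⊆ B)
    (h1 : B ⊆ closure D) : O ⊆ closure (D ∩ O) := by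
  intro s hs
  rw [_root_.mem_closure_iff]
  intro o ho hso
  obtain ⟨y, hy1, hy2⟩ := _root_.mem_closure_iff.1 (h1 (hOB hs)) (o ∩ O) (ho.inter hO) ⟨hso, hs⟩
  exact ⟨y, hy1.1, hy2, hy1.2⟩

lemma mero_dense_inter {B D D' : Set G} (hD : IsOpen D) (hD' : IsOpen D')
    (hDB : D ⊆ B) (h1 : B ⊆ closure D) (h2 : B ⊆ closure D') :
    B ⊆ closure (D ∩ D') := by
  intro s hs
  rw [_root_.mem_closure_iff]
  intro o ho hso
  obtain ⟨y, hy1, hy2⟩ := _root_.mem_closure_iff.1 (h1 hs) o ho hso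
  obtain ⟨z, hz1, hz2⟩ :=
    _root_.mem_closure_iff.1 (h2 (hDB hy2)) (o ∩ D) (ho.inter hD) ⟨hy1, hy2⟩
  exact ⟨z, hz1.1, hz1.2, hz2⟩

lemma mero_isOpen_ne {B : Set G} (hB : IsOpen B) {f : G → ℂ}
    (hf : AnalyticOnNhd ℂ f B) : IsOpen {s | s ∈ B ∧ f s ≠ 0} := by
  rw [isOpen_iff_mem_nhds]
  rintro s ⟨hsB, hsf⟩
  have h1 : ∀ᶠ x in nhds s, f x ≠ 0 := (hf s hsB).continuousAt.eventually_ne hsf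
  filter_upwards [h1, hB.mem_nhds hsB] with x hx1 hx2
  exact ⟨hx2, hx1⟩

/-- separating functionals via duals -/
lemma mero_eq_of_forall_dual {F : Type*} [NormedAddCommGroup F] [NormedSpace ℂ F] {x y : F}
    (h : ∀ l : F →L[ℂ] ℂ, l x = l y) : x = y := by
  by_contra hne
  obtain ⟨f, hf⟩ := SeparatingDual.exists_ne_zero (R := ℂ) (sub_ne_zero_of_ne hne)
  apply hf
  simp [map_sub, h f]

lemma mero_exists_functional {V : Type*} [AddCommGroup V] [Module ℂ V]
    {p : Submodule ℂ V} {w : V} (hw : w ∉ p) :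
    ∃ φ : V →ₗ[ℂ] ℂ, (∀ x ∈ p, φ x = 0) ∧ φ w ≠ 0 := by
  have h0 : p.mkQ w ≠ 0 := by
    simpa [Submodule.Quotient.mk_eq_zero] using hw
  obtain ⟨ψ, hψ⟩ : ∃ ψ : (V ⧸ p) →ₗ[ℂ] ℂ, ψ (p.mkQ w) ≠ 0 := by
    by_contra hcon
    push_neg at hcon
    exact h0 ((Module.forall_dual_apply_eq_zero_iff ℂ _).1 hcon)
  refine ⟨ψ ∘ₗ p.mkQ, fun x hx => ?_, hψ⟩
  simp [Submodule.mkQ_apply, (Submodule.Quotient.mk_eq_zero _).2 hx]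

lemma mero_indep_of_det {V : Type*} [AddCommGroup V] [Module ℂ V] {m : ℕ}
    {v : Fin m → V} {g : Fin m → V →ₗ[ℂ] ℂ}
    (h : (Matrix.of fun a b => g a (v b)).det ≠ 0) : LinearIndependent ℂ v := by
  rw [Fintype.linearIndependent_iff]
  intro cc hcc
  by_contra hc
  push_neg at hc
  obtain ⟨b0, hb0⟩ := hc
  apply h
  rw [← Matrix.exists_mulVec_eq_zero_iff]
  refine ⟨cc, fun hzero => hb0 (congrFun hzero b0), ?_⟩
  funext a
  simp only [Matrix.mulVec, dotProduct, Matrix.of_apply, Pi.zero_apply]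
  have : ∑ b, cc b • g a (v b) = g a (∑ b, cc b • v b) := by
    rw [map_sum]; congr 1; funext b; rw [map_smul]
  simpa [hcc, mul_comm] using this.trans (by rw [hcc, map_zero])

lemma mero_exists_dualfam {V : Type*} [AddCommGroup V] [Module ℂ V]
    {m : ℕ} {v : Fin m → V} (hv : LinearIndependent ℂ v) :
    ∃ g : Fin m → (V →ₗ[ℂ] ℂ), (Matrix.of fun a b => g a (v b)).det ≠ 0 := by
  have key : ∀ a : Fin m, ∃ φ : V →ₗ[ℂ] ℂ, (∀ x ∈ span ℂ (v '' {a}ᶜ), φ x = 0) ∧ φ (v a) ≠ 0 := by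
    intro a
    exact mero_exists_functional (hv.notMem_span_image (by simp))
  choose φ hφ0 hφne using key
  refine ⟨φ, ?_⟩
  have hdiag : (Matrix.of fun a b => φ a (v b)) = Matrix.diagonal (fun a => φ a (v a)) := by
    ext a b
    by_cases hab : a = b
    · subst hab; simp [Matrix.diagonal]
    · have hmem : v b ∈ span ℂ (v '' {a}ᶜ) :=
        subset_span ⟨b, by simp [Ne.symm hab], rfl⟩
      simp [Matrix.diagonal, hab, hφ0 a _ hmem]
  rw [hdiag, Matrix.det_diagonal]
  exact Finset.prod_ne_zero_iff.2 fun a _ => hφne a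

end helpers

section helpers2

/-- from independent rows in `Fin k → ℂ`, select columns with nonzero minor -/
lemma mero_colselect {r k : ℕ} {v : Fin r → (Fin k → ℂ)} (hv : LinearIndependent ℂ v) :
    ∃ jsel : Fin r → Fin k, (Matrix.of fun a b => v a (jsel b)).det ≠ 0 := by
  classical
  set cols : Fin k → (Fin r → ℂ) := fun j a => v a j with hcols
  have hspan : span ℂ (Set.range cols) = ⊤ := by
    by_contra hne
    obtain ⟨w, hw⟩ := SetLike.exists_of_lt (lt_top_iff_ne_top.2 hne : span ℂ (Set.range cols) < ⊤)
    obtain ⟨φ, hφ0, hφne⟩ := mero_exists_functional hw.2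
    have hccne : ∃ a, φ (fun j => if a = j then 1 else 0) ≠ 0 := by
      by_contra hc; push_neg at hc
      apply hφne
      rw [LinearMap.pi_apply_eq_sum_univ φ w]
      simp [hc]
    have hsum : ∑ a, (φ fun j' => if a = j' then 1 else 0) • v a = 0 := by
      funext j
      have h1 : φ (cols j) = 0 := hφ0 _ (subset_span ⟨j, rfl⟩)
      have h2 := LinearMap.pi_apply_eq_sum_univ φ (cols j)
      rw [h1] at h2
      simp only [Finset.sum_apply, Pi.smul_apply, smul_eq_mul, Pi.zero_apply]
      have h3 : ∑ a, (φ fun j' => if a = j' then 1 else 0) * v a j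
          = ∑ i, cols j i • (φ fun j' => if i = j' then 1 else 0) := by
        apply Finset.sum_congr rfl; intro a _
        show _ = v a j • _
        simp [smul_eq_mul, mul_comm]
      rw [h3, ← h2]
    obtain ⟨a, ha⟩ := hccne
    exact ha (Fintype.linearIndependent_iff.1 hv _ hsum a)
  obtain ⟨bset, hbsub, hbspan, hbind⟩ := exists_linearIndependent ℂ (Set.range cols)
  rw [hspan] at hbspan
  haveI : Fintype bset := (hbind.setFinite).fintype
  have hbasis : Fintype.card bset = r := by
    have hb : Basis bset ℂ (Fin r → ℂ) :=
      Basis.mk hbind (by rw [Subtype.range_coe]; exact hbspan.ge)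
    rw [← finrank_eq_card_basis hb, Module.finrank_fin_fun]
  set eqv : Fin r ≃ bset := (Fintype.equivFinOfCardEq hbasis).symm with heqv
  have hpick : ∀ b : Fin r, ∃ j : Fin k, cols j = (eqv b : Fin r → ℂ) := fun b => hbsub (eqv b).2
  choose jsel hjsel using hpick
  refine ⟨jsel, fun hdet => ?_⟩
  obtain ⟨cc, hccne, hccz⟩ := (Matrix.exists_mulVec_eq_zero_iff).2 hdet
  have hind2 : LinearIndependent ℂ (fun b : Fin r => (eqv b : Fin r → ℂ)) :=
    hbind.comp (fun b => eqv b) (fun x y hxy => eqv.injective hxy)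
  apply hccne
  have hs0 : ∑ b, cc b • (eqv b : Fin r → ℂ) = 0 := by
    funext a
    have hM := congrFun hccz a
    simp only [Matrix.mulVec, dotProduct, Matrix.of_apply, Pi.zero_apply] at hM ⊢
    simp only [Finset.sum_apply, Pi.smul_apply, smul_eq_mul]
    rw [← hM]
    congr 1; funext b
    rw [← hjsel b]
    simp [hcols, mul_comm]
  have hz := Fintype.linearIndependent_iff.1 hind2 cc hs0
  funext a; exact hz a

/-- determinant of analytic matrix entries is analytic -/
lemma mero_analyticOnNhd_det {G : Type*} [NormedAddCommGroup G] [NormedSpace ℂ G]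
    {m : ℕ} {B : Set G} {f : G → Matrix (Fin m) (Fin m) ℂ}
    (hf : ∀ a b, AnalyticOnNhd ℂ (fun s => f s a b) B) :
    AnalyticOnNhd ℂ (fun s => (f s).det) B := by
  have hrw : (fun s => (f s).det)
      = fun s => ∑ σ : Equiv.Perm (Fin m),
          ((Equiv.Perm.sign σ : ℤ) : ℂ) * ∏ a, f s (σ a) a := by
    funext s
    rw [Matrix.det_apply]
    congr 1; funext σ
    simp [Units.smul_def, zsmul_eq_mul]
  rw [hrw]
  apply Finset.analyticOnNhd_fun_sum
  intro σ _
  exact (analyticOnNhd_const).mul (Finset.analyticOnNhd_fun_prod _ fun a _ => hf (σ a) a)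

end helpers2

section genspan

variable {G : Type*} [NormedAddCommGroup G] [NormedSpace ℂ G]

lemma mero_generic_span {B : Set G} (hBne : B.Nonempty)
    {V : Type*} [NormedAddCommGroup V] [NormedSpace ℂ V] [FiniteDimensional ℂ V]
    {ι' : Type*} (A : ι' → G → V) (hA : ∀ p, AnalyticOnNhd ℂ (A p) B) :
    ∃ (r : ℕ) (idx : Fin r → ι') (d : G → ℂ),
      AnalyticOnNhd ℂ d B ∧ (∃ s ∈ B, d s ≠ 0) ∧
      ∀ s ∈ B, d s ≠ 0 →
        LinearIndependent ℂ (fun l => A (idx l) s) ∧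
        ∀ p, A p s ∈ span ℂ (Set.range fun l => A (idx l) s) := by
  classical
  set Rset : Set ℕ := {m | ∃ (idx : Fin m → ι') (g : Fin m → V →ₗ[ℂ] ℂ),
    ∃ s ∈ B, (Matrix.of fun a b => g a (A (idx b) s)).det ≠ 0} with hRset
  have h0 : 0 ∈ Rset := by
    obtain ⟨s, hs⟩ := hBne
    exact ⟨Fin.elim0, Fin.elim0, s, hs, by simp [Matrix.det_fin_zero]⟩
  have hbdd : ∀ m ∈ Rset, m ≤ finrank ℂ V := by
    rintro m ⟨idx, g, s, hs, hdet⟩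
    have hind := mero_indep_of_det hdet
    simpa using hind.fintype_card_le_finrank
  have hbddA : BddAbove Rset := ⟨finrank ℂ V, fun m hm => hbdd m hm⟩
  set r := sSup Rset with hr
  have hrmem : r ∈ Rset := Nat.sSup_mem ⟨0, h0⟩ hbddA
  obtain ⟨idx, g, s₀, hs₀, hdet₀⟩ := hrmem
  refine ⟨r, idx, fun s => (Matrix.of fun a b => g a (A (idx b) s)).det, ?_, ⟨s₀, hs₀, hdet₀⟩, ?_⟩
  · apply mero_analyticOnNhd_det
    intro a b
    have hcont : AnalyticOnNhd ℂ (⇑(LinearMap.toContinuousLinearMap (g a)) ∘ (A (idx b))) B :=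
      (LinearMap.toContinuousLinearMap (g a)).comp_analyticOnNhd (hA (idx b))
    simpa [Function.comp_def] using hcont
  · intro s hs hds
    have hind : LinearIndependent ℂ (fun l => A (idx l) s) := mero_indep_of_det hds
    refine ⟨hind, fun p => ?_⟩
    by_contra hnm
    have hsnoc : LinearIndependent ℂ (Fin.snoc (fun l => A (idx l) s) (A p s) : Fin (r+1) → V) :=
      linearIndependent_fin_snoc.2 ⟨hind, hnm⟩
    obtain ⟨g', hg'⟩ := mero_exists_dualfam hsnoc
    have hmem : r + 1 ∈ Rset := by
      refine ⟨(Fin.snoc idx p : Fin (r+1) → ι'), g', s, hs, ?_⟩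
      have : (Matrix.of fun a b => g' a (A ((Fin.snoc idx p : Fin (r+1) → ι') b) s))
          = Matrix.of fun a b => g' a ((Fin.snoc (fun l => A (idx l) s) (A p s) : Fin (r+1) → V) b) := by
        ext a b
        refine Fin.lastCases ?_ (fun bb => ?_) b <;> simp [Fin.snoc_last, Fin.snoc_castSucc]
      rw [this]
      exact hg'
    have := le_csSup hbddA hmem
    omega
end genspan

section mainlocal

variable {N : ℕ} {E : Type*} [NormedAddCommGroup E] [NormedSpace ℂ E]

lemma mero_clm_apply {E' : Type*} [NormedAddCommGroup E'] [NormedSpace ℂ E']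
    {B : Set (Fin N → ℂ)} {f : (Fin N → ℂ) → (E →L[ℂ] E')} {x : (Fin N → ℂ) → E}
    (hf : AnalyticOnNhd ℂ f B) (hx : AnalyticOnNhd ℂ x B) :
    AnalyticOnNhd ℂ (fun s => f s (x s)) B := fun z hz =>
  ((ContinuousLinearMap.apply ℂ E').flip.analyticAt_bilinear (f z, x z)).comp₂ (hf z hz) (hx z hz)

lemma mero_eq_zero_of_forall_dual {F : Type*} [NormedAddCommGroup F] [NormedSpace ℂ F] {x : F}
    (h : ∀ l : F →L[ℂ] ℂ, l x = 0) : x = 0 :=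
  mero_eq_of_forall_dual (by simpa using h)

lemma mero_local_chart {M : Set (Fin N → ℂ)}
    {ι : Type*} {F : ι → Type*} [∀ i, NormedAddCommGroup (F i)] [∀ i, NormedSpace ℂ (F i)]
    {μ : ∀ i : ι, (Fin N → ℂ) → (E →L[ℂ] F i)} {c : ∀ i : ι, (Fin N → ℂ) → F i}
    (hμ : ∀ i, AnalyticOnNhd ℂ (μ i) M) (hc : ∀ i, AnalyticOnNhd ℂ (c i) M)
    {Sol : (Fin N → ℂ) → Set E}
    (hSol : ∀ s, Sol s = {x : E | ∀ i, μ i s x = c i s})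
    {Munq : Set (Fin N → ℂ)}
    (hMunq : Munq = {s | s ∈ M ∧ ∃! x : E, x ∈ Sol s})
    {v : (Fin N → ℂ) → E}
    (hv : ∀ s ∈ Munq, Sol s = {v s})
    {W : Set (Fin N → ℂ)} (hWo : IsOpen W) (hWM : W ⊆ M)
    {k : ℕ} {e : Fin k → (Fin N → ℂ) → E} (he : ∀ j, AnalyticOnNhd ℂ (e j) W)
    (hspan : ∀ s ∈ W, Sol s ⊆ (span ℂ (Set.range fun j => e j s) : Set E))
    {s₀ : (Fin N → ℂ)} (hs₀ : s₀ ∈ W) :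
    ∃ (B D : Set (Fin N → ℂ)) (g : (Fin N → ℂ) → ℂ) (h : (Fin N → ℂ) → E),
      IsOpen B ∧ IsConnected B ∧ s₀ ∈ B ∧ B ⊆ W ∧ IsOpen D ∧ D ⊆ B ∧ B ⊆ closure D ∧
      (D ∩ Munq = ∅ ∨
        (D ⊆ Munq ∧ AnalyticOnNhd ℂ v D ∧ AnalyticOnNhd ℂ g B ∧ AnalyticOnNhd ℂ h B ∧
          (∃ s ∈ B, g s ≠ 0) ∧ ∀ s ∈ D, g s • v s = h s)) := by
  classical
  obtain ⟨ε, hε, hball⟩ := Metric.isOpen_iff.1 hWo s₀ hs₀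
  set B := Metric.ball s₀ ε with hBdef
  have hBo : IsOpen B := Metric.isOpen_ball
  have hBc : IsPreconnected B := (convex_ball s₀ ε).isPreconnected
  have hs₀B : s₀ ∈ B := Metric.mem_ball_self hε
  have hBne : B.Nonempty := ⟨s₀, hs₀B⟩
  have hBconn : IsConnected B := ⟨hBne, hBc⟩
  have hBW : B ⊆ W := hball
  have hBM : B ⊆ M := hBW.trans hWM
  have he' : ∀ j, AnalyticOnNhd ℂ (e j) B := fun j => (he j).mono hBW
  -- the rows of the linear systems
  set A₁ : (Σ i : ι, (F i →L[ℂ] ℂ)) → (Fin N → ℂ) → ((Fin k → ℂ) × ℂ) :=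
    fun p s => (fun j => p.2 (μ p.1 s (e j s)), p.2 (c p.1 s)) with hA₁def
  set A₃ : ((Σ i : ι, (F i →L[ℂ] ℂ)) ⊕ (E →L[ℂ] ℂ)) → (Fin N → ℂ) → (Fin k → ℂ) :=
    Sum.elim (fun p s => (A₁ p s).1) (fun q s j => q (e j s)) with hA₃def
  -- analyticity of the rows
  have hentry : ∀ (i : ι) (l : F i →L[ℂ] ℂ) (j : Fin k),
      AnalyticOnNhd ℂ (fun s => l (μ i s (e j s))) B := by
    intro i l j
    have h1 : AnalyticOnNhd ℂ (fun s => μ i s (e j s)) B :=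
      mero_clm_apply ((hμ i).mono hBM) (he' j)
    simpa [Function.comp_def] using l.comp_analyticOnNhd h1
  have hβe : ∀ (i : ι) (l : F i →L[ℂ] ℂ), AnalyticOnNhd ℂ (fun s => l (c i s)) B := by
    intro i l
    simpa [Function.comp_def] using l.comp_analyticOnNhd ((hc i).mono hBM)
  have hLe : ∀ (q : E →L[ℂ] ℂ) (j : Fin k), AnalyticOnNhd ℂ (fun s => q (e j s)) B := by
    intro q j
    simpa [Function.comp_def] using q.comp_analyticOnNhd (he' j)
  have hA₁ : ∀ p, AnalyticOnNhd ℂ (A₁ p) B :=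
    fun p => (AnalyticOnNhd.pi fun j => hentry p.1 p.2 j).prod (hβe p.1 p.2)
  have hA₂ : ∀ p : (Σ i : ι, (F i →L[ℂ] ℂ)), AnalyticOnNhd ℂ (fun s => (A₁ p s).1) B :=
    fun p => AnalyticOnNhd.pi fun j => hentry p.1 p.2 j
  have hA₃ : ∀ p, AnalyticOnNhd ℂ (A₃ p) B := by
    rintro (p | q)
    · exact hA₂ p
    · exact AnalyticOnNhd.pi fun j => hLe q j
  -- the three generic-rank data
  obtain ⟨r₁, idx₁, d₁, hd₁a, hd₁ne, hd₁⟩ := mero_generic_span hBne A₁ hA₁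
  obtain ⟨r₂, idx₂, d₂, hd₂a, hd₂ne, hd₂⟩ :=
    mero_generic_span hBne (fun p s => (A₁ p s).1) hA₂
  obtain ⟨r₃, idx₃, d₃, hd₃a, hd₃ne, hd₃⟩ := mero_generic_span hBne A₃ hA₃
  set D1 := {s | s ∈ B ∧ d₁ s ≠ 0} with hD1def
  set D2 := {s | s ∈ B ∧ d₂ s ≠ 0} with hD2def
  set D3 := {s | s ∈ B ∧ d₃ s ≠ 0} with hD3def
  set D123 := D1 ∩ D2 ∩ D3 with hD123def
  have hD1o : IsOpen D1 := mero_isOpen_ne hBo hd₁a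
  have hD2o : IsOpen D2 := mero_isOpen_ne hBo hd₂a
  have hD3o : IsOpen D3 := mero_isOpen_ne hBo hd₃a
  have hD123o : IsOpen D123 := (hD1o.inter hD2o).inter hD3o
  have hD123B : D123 ⊆ B := fun s hs => hs.1.1.1
  have hD123d : B ⊆ closure D123 := by
    apply mero_dense_inter (hD1o.inter hD2o) hD3o (fun s hs => hs.1.1)
    · exact mero_dense_inter hD1o hD2o (fun s hs => hs.1)
        (mero_dense_ne_zero hBo hBc hd₁a hd₁ne) (mero_dense_ne_zero hBo hBc hd₂a hd₂ne)
    · exact mero_dense_ne_zero hBo hBc hd₃a hd₃ne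
  -- membership translations
  have hrep : ∀ s ∈ B, ∀ x ∈ Sol s, ∃ a : Fin k → ℂ, ∑ j, a j • e j s = x := by
    intro s hs x hx
    exact (mem_span_range_iff_exists_fun ℂ).1 (hspan s (hBW hs) hx)
  have hexp : ∀ (i : ι) (l : F i →L[ℂ] ℂ) (s : Fin N → ℂ) (a : Fin k → ℂ),
      l (μ i s (∑ j, a j • e j s)) = ∑ j, l (μ i s (e j s)) * a j := by
    intro i l s a
    rw [map_sum (μ i s), map_sum l]
    apply Finset.sum_congr rfl
    intro j _
    rw [map_smul (μ i s), map_smul l, smul_eq_mul, mul_comm]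
  have hT2 : ∀ s, ∀ a : Fin k → ℂ,
      (∑ j, a j • e j s) ∈ Sol s ↔
        ∀ p : (Σ i : ι, (F i →L[ℂ] ℂ)), ∑ j, (A₁ p s).1 j * a j = (A₁ p s).2 := by
    intro s a
    rw [hSol]
    constructor
    · rintro hx ⟨i, l⟩
      have hxi : μ i s (∑ j, a j • e j s) = c i s := hx i
      have h1 : l (μ i s (∑ j, a j • e j s)) = l (c i s) := by rw [hxi]
      rw [hexp i l s a] at h1
      exact h1
    · intro hp i
      apply mero_eq_of_forall_dual
      intro l
      have h1 := hp ⟨i, l⟩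
      rw [hexp i l s a]
      exact h1
  by_cases hgood : ∃ s, s ∈ D123 ∧ s ∈ Munq
  case neg =>
    refine ⟨B, D123, fun _ => 1, fun _ => 0, hBo, hBconn, hs₀B, hBW, hD123o, hD123B, hD123d,
      Or.inl ?_⟩
    rw [Set.eq_empty_iff_forall_notMem]
    rintro x ⟨hx1, hx2⟩
    exact hgood ⟨x, hx1, hx2⟩
  case pos =>
  obtain ⟨sS, hsSD, hsSMunq⟩ := hgood
  have hsSB : sS ∈ B := hD123B hsSD
  have hd₁S : d₁ sS ≠ 0 := hsSD.1.1.2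
  have hd₂S : d₂ sS ≠ 0 := hsSD.1.2.2
  have hd₃S : d₃ sS ≠ 0 := hsSD.2.2
  have hvmemS : v sS ∈ Sol sS := by rw [hv sS hsSMunq]; rfl
  obtain ⟨aS, haS⟩ := hrep sS hsSB _ hvmemS
  have hsatS : ∀ p, ∑ j, (A₁ p sS).1 j * aS j = (A₁ p sS).2 :=
    (hT2 sS aS).1 (by rw [haS]; exact hvmemS)
  -- coefficient rows at sS are independent
  have hindC : LinearIndependent ℂ (fun l => (A₁ (idx₁ l) sS).1) := by
    rw [Fintype.linearIndependent_iff]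
    intro cc hcc
    have hccj : ∀ j, ∑ l, cc l * (A₁ (idx₁ l) sS).1 j = 0 := by
      intro j
      have h1 := congrFun hcc j
      simpa [Finset.sum_apply, smul_eq_mul] using h1
    have h3 : ∑ l, cc l * (A₁ (idx₁ l) sS).2 = 0 := by
      calc ∑ l, cc l * (A₁ (idx₁ l) sS).2
          = ∑ l, ∑ j, cc l * ((A₁ (idx₁ l) sS).1 j * aS j) := by
            apply Finset.sum_congr rfl; intro l _
            rw [← hsatS (idx₁ l), Finset.mul_sum]
        _ = ∑ j, ∑ l, cc l * ((A₁ (idx₁ l) sS).1 j * aS j) := Finset.sum_comm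
        _ = ∑ j, (∑ l, cc l * (A₁ (idx₁ l) sS).1 j) * aS j := by
            apply Finset.sum_congr rfl; intro j _
            rw [Finset.sum_mul]
            apply Finset.sum_congr rfl; intro l _; ring
        _ = 0 := by
            apply Finset.sum_eq_zero; intro j _; rw [hccj j, zero_mul]
    have hfull : ∑ l, cc l • A₁ (idx₁ l) sS = 0 := by
      have hfst : (∑ l, cc l • A₁ (idx₁ l) sS).1 = ∑ l, cc l • (A₁ (idx₁ l) sS).1 := by
        simp [Prod.fst_sum]
      have hsnd : (∑ l, cc l • A₁ (idx₁ l) sS).2 = ∑ l, cc l * (A₁ (idx₁ l) sS).2 := by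
        simp [Prod.snd_sum, smul_eq_mul]
      rw [Prod.ext_iff]
      constructor
      · rw [hfst]
        funext j
        simpa [Finset.sum_apply, smul_eq_mul] using hccj j
      · rw [hsnd, h3]; rfl
    intro l
    exact Fintype.linearIndependent_iff.1 (hd₁ sS hsSB hd₁S).1 cc hfull l
  obtain ⟨jsel, hjdet⟩ := mero_colselect hindC
  -- the explicit (Cramer) solution
  set Cmat : (Fin N → ℂ) → Matrix (Fin r₁) (Fin r₁) ℂ :=
    fun s => Matrix.of fun l b => (A₁ (idx₁ l) s).1 (jsel b) with hCmatdef
  set gg : (Fin N → ℂ) → ℂ := fun s => (Cmat s).det with hggdef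
  set cram : (Fin N → ℂ) → Fin r₁ → ℂ :=
    fun s => Matrix.cramer (Cmat s) (fun l => (A₁ (idx₁ l) s).2) with hcramdef
  set aa : (Fin N → ℂ) → Fin k → ℂ :=
    fun s j => ∑ b, if jsel b = j then cram s b else 0 with haadef
  set hh : (Fin N → ℂ) → E := fun s => ∑ j, aa s j • e j s with hhhdef
  have hggS : gg sS ≠ 0 := hjdet
  have hgga : AnalyticOnNhd ℂ gg B :=
    mero_analyticOnNhd_det fun l b => hentry (idx₁ l).1 (idx₁ l).2 (jsel b)
  have hcramb : ∀ b, AnalyticOnNhd ℂ (fun s => cram s b) B := by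
    intro b
    have h1 : (fun s => cram s b)
        = fun s => ((Cmat s).updateCol b (fun l => (A₁ (idx₁ l) s).2)).det := by
      funext s
      rw [hcramdef]
      simp [Matrix.cramer_apply]
    rw [h1]
    apply mero_analyticOnNhd_det
    intro l b'
    have h2 : (fun s => ((Cmat s).updateCol b fun l' => (A₁ (idx₁ l') s).2) l b')
        = fun s => if b' = b then (A₁ (idx₁ l) s).2 else Cmat s l b' := by
      funext s
      rw [Matrix.updateCol_apply]
    rw [h2]
    by_cases hb : b' = b
    · simpa [hb] using hβe (idx₁ l).1 (idx₁ l).2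
    · simpa [hb, hCmatdef] using hentry (idx₁ l).1 (idx₁ l).2 (jsel b')
  have haaj : ∀ j, AnalyticOnNhd ℂ (fun s => aa s j) B := by
    intro j
    apply Finset.analyticOnNhd_fun_sum
    intro b _
    by_cases hb : jsel b = j
    · simpa [hb] using hcramb b
    · simp only [hb, if_false]
      exact analyticOnNhd_const
  have hhha : AnalyticOnNhd ℂ hh B :=
    Finset.analyticOnNhd_fun_sum _ fun j _ => (haaj j).smul (he' j)
  -- Cramer identity
  have hCa : ∀ (s : Fin N → ℂ) (l : Fin r₁),
      ∑ j, (A₁ (idx₁ l) s).1 j * aa s j = gg s * (A₁ (idx₁ l) s).2 := by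
    intro s l
    have h1 : ∑ j, (A₁ (idx₁ l) s).1 j * aa s j = ∑ b, Cmat s l b * cram s b := by
      calc ∑ j, (A₁ (idx₁ l) s).1 j * aa s j
          = ∑ j, ∑ b, (if jsel b = j then (A₁ (idx₁ l) s).1 j * cram s b else 0) := by
            apply Finset.sum_congr rfl; intro j _
            rw [show aa s j = ∑ b, if jsel b = j then cram s b else 0 from rfl, Finset.mul_sum]
            apply Finset.sum_congr rfl; intro b _
            split <;> simp
        _ = ∑ b, ∑ j, (if jsel b = j then (A₁ (idx₁ l) s).1 j * cram s b else 0) :=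
            Finset.sum_comm
        _ = ∑ b, (A₁ (idx₁ l) s).1 (jsel b) * cram s b := by
            apply Finset.sum_congr rfl; intro b _
            simpa using Finset.sum_ite_eq Finset.univ (jsel b)
              (fun j => (A₁ (idx₁ l) s).1 j * cram s b)
        _ = ∑ b, Cmat s l b * cram s b := rfl
    have h2 := congrFun (Matrix.mulVec_cramer (Cmat s) (fun l' => (A₁ (idx₁ l') s).2)) l
    rw [h1]
    simpa [Matrix.mulVec, dotProduct, smul_eq_mul] using h2
  -- the scaled Cramer vector solves all equations where d₁ ≠ 0, gg ≠ 0
  have hsat_w : ∀ s ∈ B, d₁ s ≠ 0 → gg s ≠ 0 →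
      ∀ p, ∑ j, (A₁ p s).1 j * ((gg s)⁻¹ * aa s j) = (A₁ p s).2 := by
    intro s hs hd hg p
    obtain ⟨co, hco⟩ : ∃ co : Fin r₁ → ℂ, ∑ l, co l • A₁ (idx₁ l) s = A₁ p s :=
      (mem_span_range_iff_exists_fun ℂ).1 ((hd₁ s hs hd).2 p)
    have hfst : ∀ j, (A₁ p s).1 j = ∑ l, co l * (A₁ (idx₁ l) s).1 j := by
      intro j
      rw [← hco]
      simp [Prod.fst_sum, Finset.sum_apply, smul_eq_mul]
    have hsnd : (A₁ p s).2 = ∑ l, co l * (A₁ (idx₁ l) s).2 := by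
      rw [← hco]
      simp [Prod.snd_sum, smul_eq_mul]
    calc ∑ j, (A₁ p s).1 j * ((gg s)⁻¹ * aa s j)
        = ∑ j, ∑ l, co l * ((gg s)⁻¹ * ((A₁ (idx₁ l) s).1 j * aa s j)) := by
          apply Finset.sum_congr rfl; intro j _
          rw [hfst j, Finset.sum_mul]
          apply Finset.sum_congr rfl; intro l _; ring
      _ = ∑ l, co l * ((gg s)⁻¹ * ∑ j, (A₁ (idx₁ l) s).1 j * aa s j) := by
          rw [Finset.sum_comm]
          apply Finset.sum_congr rfl; intro l _
          rw [Finset.mul_sum, Finset.mul_sum]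
      _ = ∑ l, co l * (A₁ (idx₁ l) s).2 := by
          apply Finset.sum_congr rfl; intro l _
          rw [hCa s l]
          field_simp
      _ = (A₁ p s).2 := hsnd.symm
  have hwmem : ∀ s ∈ B, d₁ s ≠ 0 → gg s ≠ 0 → ((gg s)⁻¹ • hh s) ∈ Sol s := by
    intro s hs hd hg
    have h1 : (gg s)⁻¹ • hh s = ∑ j, ((gg s)⁻¹ * aa s j) • e j s := by
      rw [hhhdef]
      simp only [Finset.smul_sum, smul_smul]
    rw [h1]
    exact (hT2 s _).2 (hsat_w s hs hd hg)
  -- uniqueness at the special point: L-rows lie in the span of coefficient rows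
  have hLspanS : ∀ q : E →L[ℂ] ℂ,
      (fun j => q (e j sS)) ∈ span ℂ (Set.range fun l => (A₁ (idx₂ l) sS).1) := by
    intro q
    by_contra hnm
    obtain ⟨φ, hφ0, hφne⟩ := mero_exists_functional hnm
    set tt : Fin k → ℂ := fun i => φ (fun j => if i = j then 1 else 0) with httdef
    have hφsum : ∀ w : Fin k → ℂ, φ w = ∑ i, w i * tt i := by
      intro w
      rw [LinearMap.pi_apply_eq_sum_univ φ w]
      apply Finset.sum_congr rfl; intro i _
      rw [smul_eq_mul]
    have hperp : ∀ p, ∑ j, (A₁ p sS).1 j * tt j = 0 := by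
      intro p
      have hm := (hd₂ sS hsSB hd₂S).2 p
      have h0 := hφ0 _ hm
      rw [hφsum] at h0
      exact h0
    have hxmem : (∑ j, (aS j + tt j) • e j sS) ∈ Sol sS := by
      apply (hT2 sS _).2
      intro p
      have : ∑ j, (A₁ p sS).1 j * (aS j + tt j)
          = (∑ j, (A₁ p sS).1 j * aS j) + ∑ j, (A₁ p sS).1 j * tt j := by
        rw [← Finset.sum_add_distrib]
        apply Finset.sum_congr rfl; intro j _; ring
      rw [this, hsatS p, hperp p, add_zero]
    have hxv : (∑ j, (aS j + tt j) • e j sS) = v sS := by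
      have := hv sS hsSMunq ▸ hxmem
      simpa using this
    have hte : ∑ j, tt j • e j sS = 0 := by
      have hsplit : ∑ j, (aS j + tt j) • e j sS
          = (∑ j, aS j • e j sS) + ∑ j, tt j • e j sS := by
        rw [← Finset.sum_add_distrib]
        apply Finset.sum_congr rfl; intro j _; rw [add_smul]
      rw [hsplit, haS] at hxv
      exact add_left_cancel (hxv.trans (add_zero (v sS)).symm)
    apply hφne
    rw [hφsum]
    have : ∀ j, q (e j sS) * tt j = q (tt j • e j sS) := by
      intro j; rw [map_smul, smul_eq_mul, mul_comm]
    calc ∑ j, q (e j sS) * tt j = ∑ j, q (tt j • e j sS) := by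
          apply Finset.sum_congr rfl; intro j _; exact this j
      _ = q (∑ j, tt j • e j sS) := (map_sum q _ _).symm
      _ = 0 := by rw [hte, map_zero]
  -- rank comparison
  have hfr3 : finrank ℂ (span ℂ (Set.range fun m => A₃ (idx₃ m) sS)) = r₃ := by
    rw [finrank_span_eq_card (hd₃ sS hsSB hd₃S).1, Fintype.card_fin]
  have hfr2 : finrank ℂ (span ℂ (Set.range fun l => (A₁ (idx₂ l) sS).1)) = r₂ := by
    rw [finrank_span_eq_card (hd₂ sS hsSB hd₂S).1, Fintype.card_fin]
  have hr32 : r₃ ≤ r₂ := by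
    have hle : span ℂ (Set.range fun m => A₃ (idx₃ m) sS)
        ≤ span ℂ (Set.range fun l => (A₁ (idx₂ l) sS).1) := by
      rw [span_le]
      rintro _ ⟨m, rfl⟩
      show A₃ (idx₃ m) sS ∈ (span ℂ (Set.range fun l => (A₁ (idx₂ l) sS).1) : Set (Fin k → ℂ))
      rcases hm : idx₃ m with p | q
      · exact (hd₂ sS hsSB hd₂S).2 p
      · exact hLspanS q
    rw [← hfr3, ← hfr2]
    exact Submodule.finrank_mono hle
  -- L-rows lie in the span of coefficient rows at every generic point
  have hLspan : ∀ s ∈ D123, ∀ q : E →L[ℂ] ℂ,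
      (fun j => q (e j s)) ∈ span ℂ (Set.range fun l => (A₁ (idx₂ l) s).1) := by
    rintro s ⟨⟨⟨hsB, hd1⟩, ⟨-, hd2⟩⟩, ⟨-, hd3⟩⟩ q
    have h2 := hd₂ s hsB hd2
    have h3 := hd₃ s hsB hd3
    have hle : span ℂ (Set.range fun l => (A₁ (idx₂ l) s).1)
        ≤ span ℂ (Set.range fun m => A₃ (idx₃ m) s) := by
      rw [span_le]
      rintro _ ⟨l, rfl⟩
      exact h3.2 (Sum.inl (idx₂ l))
    have heq : span ℂ (Set.range fun l => (A₁ (idx₂ l) s).1)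
        = span ℂ (Set.range fun m => A₃ (idx₃ m) s) := by
      apply Submodule.eq_of_le_of_finrank_le hle
      rw [finrank_span_eq_card h3.1, finrank_span_eq_card h2.1,
        Fintype.card_fin, Fintype.card_fin]
      exact hr32
    rw [heq]
    exact h3.2 (Sum.inr q)
  -- uniqueness at every generic point
  have huniq : ∀ s ∈ D123, gg s ≠ 0 → ∀ x ∈ Sol s, x = (gg s)⁻¹ • hh s := by
    intro s hsD hg x hx
    have hsB : s ∈ B := hD123B hsD
    have hd1 : d₁ s ≠ 0 := hsD.1.1.2
    obtain ⟨a', ha'⟩ := hrep s hsB x hx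
    have hsa' : ∀ p, ∑ j, (A₁ p s).1 j * a' j = (A₁ p s).2 :=
      (hT2 s a').1 (by rw [ha']; exact hx)
    have hsw := hsat_w s hsB hd1 hg
    set tt : Fin k → ℂ := fun j => a' j - (gg s)⁻¹ * aa s j with httdef
    have htperp : ∀ p, ∑ j, (A₁ p s).1 j * tt j = 0 := by
      intro p
      have : ∑ j, (A₁ p s).1 j * tt j
          = (∑ j, (A₁ p s).1 j * a' j) - ∑ j, (A₁ p s).1 j * ((gg s)⁻¹ * aa s j) := by
        rw [← Finset.sum_sub_distrib]
        apply Finset.sum_congr rfl; intro j _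
        rw [httdef]; ring
      rw [this, hsa' p, hsw p, sub_self]
    -- the functional w ↦ ∑ j, tt j * w j kills all coefficient rows
    set ψ : (Fin k → ℂ) →ₗ[ℂ] ℂ := ∑ j, tt j • LinearMap.proj j with hψdef
    have hψapp : ∀ w : Fin k → ℂ, ψ w = ∑ j, w j * tt j := by
      intro w
      rw [hψdef]
      simp [LinearMap.sum_apply, LinearMap.smul_apply, LinearMap.proj_apply, smul_eq_mul,
        mul_comm]
    have hψspan : ∀ w ∈ span ℂ (Set.range fun l => (A₁ (idx₂ l) s).1), ψ w = 0 := by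
      intro w hw
      have hker : span ℂ (Set.range fun l => (A₁ (idx₂ l) s).1) ≤ LinearMap.ker ψ := by
        rw [span_le]
        rintro _ ⟨l, rfl⟩
        rw [SetLike.mem_coe, LinearMap.mem_ker, hψapp]
        exact htperp (idx₂ l)
      exact LinearMap.mem_ker.1 (hker hw)
    have hte : ∑ j, tt j • e j s = 0 := by
      apply mero_eq_zero_of_forall_dual
      intro q
      have h0 := hψspan _ (hLspan s hsD q)
      rw [hψapp] at h0
      calc q (∑ j, tt j • e j s) = ∑ j, q (e j s) * tt j := by
            rw [map_sum q]
            apply Finset.sum_congr rfl; intro j _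
            rw [map_smul, smul_eq_mul, mul_comm]
        _ = 0 := h0
    have hxw : x - (gg s)⁻¹ • hh s = ∑ j, tt j • e j s := by
      have h1 : (gg s)⁻¹ • hh s = ∑ j, ((gg s)⁻¹ * aa s j) • e j s := by
        rw [hhhdef]
        simp only [Finset.smul_sum, smul_smul]
      rw [← ha', h1, ← Finset.sum_sub_distrib]
      apply Finset.sum_congr rfl; intro j _
      rw [httdef, sub_smul]
    rw [← sub_eq_zero, hxw, hte]
  -- the good dense open set
  set Dg := {s | s ∈ B ∧ gg s ≠ 0} with hDgdef
  set D := D123 ∩ Dg with hDdef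
  have hDo : IsOpen D := hD123o.inter (mero_isOpen_ne hBo hgga)
  have hDB : D ⊆ B := fun s hs => hs.2.1
  have hDd : B ⊆ closure D :=
    mero_dense_inter hD123o (mero_isOpen_ne hBo hgga) hD123B hD123d
      (mero_dense_ne_zero hBo hBc hgga ⟨sS, hsSB, hggS⟩)
  have hDMunq : D ⊆ Munq := by
    rintro s ⟨hsD, hsB, hg⟩
    rw [hMunq]
    refine ⟨hBM hsB, (gg s)⁻¹ • hh s, hwmem s hsB hsD.1.1.2 hg, ?_⟩
    intro y hy
    exact huniq s hsD hg y hy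
  have hvw : ∀ s ∈ D, v s = (gg s)⁻¹ • hh s := by
    intro s hs
    apply huniq s hs.1 hs.2.2
    rw [hv s (hDMunq hs)]
    rfl
  refine ⟨B, D, gg, hh, hBo, hBconn, hs₀B, hBW, hDo, hDB, hDd, Or.inr ?_⟩
  refine ⟨hDMunq, ?_, hgga, hhha, ⟨sS, hsSB, hggS⟩, ?_⟩
  · intro u hu
    have hBu : u ∈ B := hDB hu
    have hga : AnalyticAt ℂ (fun s => (gg s)⁻¹ • hh s) u :=
      ((hgga u hBu).inv hu.2.2).smul (hhha u hBu)
    apply hga.congr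
    filter_upwards [hDo.mem_nhds hu] with z hz
    exact (hvw z hz).symm
  · intro s hs
    rw [hvw s hs, smul_smul, mul_inv_cancel₀ hs.2.2, one_smul]

end mainlocal

/-- **Principle of meromorphic continuation.**
An analytic family of systems of linear equations which is locally of finite type and
has a unique solution on a set with nonempty interior admits a solution `v` which is
analytic on an open dense subset `U` of the connected open set `M` and is meromorphic
on all of `M`. -/
theorem stmt_0 {N : ℕ} {M : Set (Fin N → ℂ)}
    (hMopen : IsOpen M) (hMconn : IsConnected M)
    {E : Type*} [NormedAddCommGroup E] [NormedSpace ℂ E] [CompleteSpace E]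
    {ι : Type*} {F : ι → Type*} [∀ i, NormedAddCommGroup (F i)] [∀ i, NormedSpace ℂ (F i)]
    [∀ i, CompleteSpace (F i)]
    (μ : ∀ i : ι, (Fin N → ℂ) → (E →L[ℂ] F i)) (c : ∀ i : ι, (Fin N → ℂ) → F i)
    (hμ : ∀ i, AnalyticOnNhd ℂ (μ i) M) (hc : ∀ i, AnalyticOnNhd ℂ (c i) M)
    (Sol : (Fin N → ℂ) → Set E)
    (hSol : ∀ s, Sol s = {x : E | ∀ i, μ i s x = c i s})
    -- the family of systems is locally of finite type
    (hfin : ∀ s₀ ∈ M, ∃ W : Set (Fin N → ℂ), IsOpen W ∧ s₀ ∈ W ∧ W ⊆ M ∧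
      ∃ (k : ℕ) (e : Fin k → (Fin N → ℂ) → E),
        (∀ j, AnalyticOnNhd ℂ (e j) W) ∧
        ∀ s ∈ W, Sol s ⊆ (Submodule.span ℂ (Set.range fun j => e j s) : Set E))
    (Munq : Set (Fin N → ℂ))
    (hMunq : Munq = {s | s ∈ M ∧ ∃! x : E, x ∈ Sol s})
    (v : (Fin N → ℂ) → E)
    (hv : ∀ s ∈ Munq, Sol s = {v s})
    (hint : (interior Munq).Nonempty) :
    ∃ U : Set (Fin N → ℂ), IsOpen U ∧ U ⊆ Munq ∧ M ⊆ closure U ∧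
      AnalyticOnNhd ℂ v U ∧
      ∀ s₀ ∈ M, ∃ W : Set (Fin N → ℂ), IsOpen W ∧ IsConnected W ∧ s₀ ∈ W ∧ W ⊆ M ∧
        ∃ (g : (Fin N → ℂ) → ℂ) (h : (Fin N → ℂ) → E),
          AnalyticOnNhd ℂ g W ∧ AnalyticOnNhd ℂ h W ∧ (∃ s ∈ W, g s ≠ 0) ∧
          ∀ s ∈ U ∩ W, g s • v s = h s := by
  classical
  have hchart : ∀ s₀ ∈ M, ∃ (B D : Set (Fin N → ℂ)) (g : (Fin N → ℂ) → ℂ)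
      (h : (Fin N → ℂ) → E),
      IsOpen B ∧ IsConnected B ∧ s₀ ∈ B ∧ B ⊆ M ∧ IsOpen D ∧ D ⊆ B ∧ B ⊆ closure D ∧
      (D ∩ Munq = ∅ ∨
        (D ⊆ Munq ∧ AnalyticOnNhd ℂ v D ∧ AnalyticOnNhd ℂ g B ∧ AnalyticOnNhd ℂ h B ∧
          (∃ s ∈ B, g s ≠ 0) ∧ ∀ s ∈ D, g s • v s = h s)) := by
    intro s₀ hs₀
    obtain ⟨W, hWo, hsW, hWM, k, e, he, hsp⟩ := hfin s₀ hs₀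
    obtain ⟨B, D, g, h, h1, h2, h3, h4, h5, h6, h7, h8⟩ :=
      mero_local_chart hμ hc hSol hMunq hv hWo hWM he hsp hsW
    exact ⟨B, D, g, h, h1, h2, h3, h4.trans hWM, h5, h6, h7, h8⟩
  choose B D g h hBo hBconn hmem hBM hDo hDB hDd hdich using hchart
  have hMsubMunq : Munq ⊆ M := by rw [hMunq]; exact fun s hs => hs.1
  set Ω := ⋃ (s) (hs : s ∈ M) (_ : (D s hs ∩ Munq).Nonempty), B s hs with hΩdef
  set Vb := ⋃ (s) (hs : s ∈ M) (_ : ¬(D s hs ∩ Munq).Nonempty), B s hs with hVdef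
  have hΩo : IsOpen Ω :=
    isOpen_iUnion fun s => isOpen_iUnion fun hs => isOpen_iUnion fun _ => hBo s hs
  have hVo : IsOpen Vb :=
    isOpen_iUnion fun s => isOpen_iUnion fun hs => isOpen_iUnion fun _ => hBo s hs
  have hdisj : Disjoint Ω Vb := by
    rw [Set.disjoint_left]
    rintro t htΩ htV
    simp only [hΩdef, hVdef, Set.mem_iUnion] at htΩ htV
    obtain ⟨s1, hs1, hne1, ht1⟩ := htΩ
    obtain ⟨s2, hs2, hne2, ht2⟩ := htV
    have hgood1 := (hdich s1 hs1).resolve_left hne1.ne_empty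
    set O := B s1 hs1 ∩ B s2 hs2 with hOdef
    have hOo : IsOpen O := (hBo _ _).inter (hBo _ _)
    have hd1 : O ⊆ closure (D s1 hs1 ∩ O) :=
      mero_dense_inter_open hOo Set.inter_subset_left (hDd s1 hs1)
    have hd2 : O ⊆ closure (D s2 hs2 ∩ O) :=
      mero_dense_inter_open hOo Set.inter_subset_right (hDd s2 hs2)
    have hdd := mero_dense_inter ((hDo s1 hs1).inter hOo) ((hDo s2 hs2).inter hOo)
      Set.inter_subset_right hd1 hd2
    have htcl := hdd ⟨ht1, ht2⟩
    obtain ⟨z, hz⟩ : ((D s1 hs1 ∩ O) ∩ (D s2 hs2 ∩ O)).Nonempty := by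
      rcases Set.eq_empty_or_nonempty ((D s1 hs1 ∩ O) ∩ (D s2 hs2 ∩ O)) with hemp | hne
      · rw [hemp, closure_empty] at htcl; exact absurd htcl (Set.notMem_empty t)
      · exact hne
    exact hne2 ⟨z, hz.2.1, hgood1.1 hz.1.1⟩
  obtain ⟨p, hp⟩ := hint
  have hpMunq : p ∈ Munq := interior_subset hp
  have hpM : p ∈ M := hMsubMunq hpMunq
  have hgoodp : (D p hpM ∩ Munq).Nonempty := by
    set O := interior Munq ∩ B p hpM with hOdef
    have hOo : IsOpen O := isOpen_interior.inter (hBo _ _)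
    have hpO : p ∈ O := ⟨hp, hmem p hpM⟩
    have htcl := mero_dense_inter_open hOo Set.inter_subset_right (hDd p hpM) hpO
    obtain ⟨z, hz⟩ : (D p hpM ∩ O).Nonempty := by
      rcases Set.eq_empty_or_nonempty (D p hpM ∩ O) with hemp | hne
      · rw [hemp, closure_empty] at htcl; exact absurd htcl (Set.notMem_empty p)
      · exact hne
    exact ⟨z, hz.1, interior_subset hz.2.1⟩
  have hpΩ : p ∈ Ω := by
    rw [hΩdef]
    simp only [Set.mem_iUnion]
    exact ⟨p, hpM, hgoodp, hmem p hpM⟩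
  have hMcov : M ⊆ Ω ∪ Vb := by
    intro s hs
    by_cases hne : (D s hs ∩ Munq).Nonempty
    · left; rw [hΩdef]; simp only [Set.mem_iUnion]; exact ⟨s, hs, hne, hmem s hs⟩
    · right; rw [hVdef]; simp only [Set.mem_iUnion]; exact ⟨s, hs, hne, hmem s hs⟩
  have hMΩ : M ⊆ Ω :=
    hMconn.isPreconnected.subset_left_of_subset_union hΩo hVo hdisj hMcov ⟨p, hpM, hpΩ⟩
  have hallgood : ∀ s (hs : s ∈ M), (D s hs ∩ Munq).Nonempty := by
    intro s hs
    by_contra hbad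
    have hsV : s ∈ Vb := by
      rw [hVdef]; simp only [Set.mem_iUnion]; exact ⟨s, hs, hbad, hmem s hs⟩
    exact Set.disjoint_left.1 hdisj (hMΩ hs) hsV
  have hprops : ∀ s (hs : s ∈ M), D s hs ⊆ Munq ∧ AnalyticOnNhd ℂ v (D s hs) ∧
      AnalyticOnNhd ℂ (g s hs) (B s hs) ∧ AnalyticOnNhd ℂ (h s hs) (B s hs) ∧
      (∃ z ∈ B s hs, g s hs z ≠ 0) ∧ ∀ z ∈ D s hs, g s hs z • v z = h s hs z :=
    fun s hs => (hdich s hs).resolve_left (hallgood s hs).ne_empty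
  set U := ⋃ (s) (hs : s ∈ M), D s hs with hUdef
  have hUo : IsOpen U := isOpen_iUnion fun s => isOpen_iUnion fun hs => hDo s hs
  have hUMunq : U ⊆ Munq := by
    intro x hx
    rw [hUdef] at hx
    simp only [Set.mem_iUnion] at hx
    obtain ⟨s, hs, hxD⟩ := hx
    exact (hprops s hs).1 hxD
  have hUv : AnalyticOnNhd ℂ v U := by
    intro x hx
    rw [hUdef] at hx
    simp only [Set.mem_iUnion] at hx
    obtain ⟨s, hs, hxD⟩ := hx
    exact (hprops s hs).2.1 x hxD
  refine ⟨U, hUo, hUMunq, ?_, hUv, ?_⟩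
  · intro s hs
    have h1 : B s hs ⊆ closure U := by
      refine (hDd s hs).trans (closure_mono ?_)
      exact Set.subset_iUnion₂ (s := fun s hs => D s hs) s hs
    exact h1 (hmem s hs)
  · intro s₀ hs₀
    refine ⟨B s₀ hs₀, hBo s₀ hs₀, hBconn s₀ hs₀, hmem s₀ hs₀, hBM s₀ hs₀,
      g s₀ hs₀, h s₀ hs₀, (hprops s₀ hs₀).2.2.1, (hprops s₀ hs₀).2.2.2.1,
      (hprops s₀ hs₀).2.2.2.2.1, ?_⟩
    intro t ht
    have hOo : IsOpen (U ∩ B s₀ hs₀) := hUo.inter (hBo _ _)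
    have hdense : (U ∩ B s₀ hs₀) ⊆ closure (D s₀ hs₀ ∩ (U ∩ B s₀ hs₀)) :=
      mero_dense_inter_open hOo Set.inter_subset_right (hDd s₀ hs₀)
    have htcl := hdense ht
    have hnb : (nhdsWithin t (D s₀ hs₀ ∩ (U ∩ B s₀ hs₀))).NeBot :=
      mem_closure_iff_nhdsWithin_neBot.1 htcl
    have hvat : ContinuousAt v t := (hUv t ht.1).continuousAt
    have hgat : ContinuousAt (g s₀ hs₀) t := ((hprops s₀ hs₀).2.2.1 t ht.2).continuousAt
    have hhat : ContinuousAt (h s₀ hs₀) t := ((hprops s₀ hs₀).2.2.2.1 t ht.2).continuousAt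
    have hF1 : Filter.Tendsto (fun z => g s₀ hs₀ z • v z)
        (nhdsWithin t (D s₀ hs₀ ∩ (U ∩ B s₀ hs₀))) (nhds (g s₀ hs₀ t • v t)) :=
      (hgat.smul hvat).continuousWithinAt
    have hF2 : Filter.Tendsto (fun z => g s₀ hs₀ z • v z)
        (nhdsWithin t (D s₀ hs₀ ∩ (U ∩ B s₀ hs₀))) (nhds (h s₀ hs₀ t)) := by
      apply Filter.Tendsto.congr' _ hhat.continuousWithinAt
      apply eventually_nhdsWithin_of_forall
      intro z hz
      exact ((hprops s₀ hs₀).2.2.2.2.2 z hz.1).symm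
    exact tendsto_nhds_unique hF1 hF2
end

section
/- Let M be a nonempty open subset of ℂ^N, let B and C be complex Banach spaces, and let μ : M → (B →L[ℂ] C) be analytic. Suppose that for some s₀ ∈ M the operator μ(s₀) is left-invertible modulo compact operators: there exist a continuous linear operator D : C → B and a compact continuous linear operator K : B → B with D ∘ μ(s₀) = id_B − K. Then the homogeneous system v ↦ μ(s)v = 0 is locally of finite type near s₀: there exist an open neighborhood W ⊆ M of s₀, an integer k ≥ 0 and analytic maps e_1, …, e_k : W → B such that for every s ∈ W, ker μ(s) ⊆ span_ℂ{e_1(s), …, e_k(s)}. -/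
lemma isClosed_sup_of_fd {E : Type*} [NormedAddCommGroup E] [NormedSpace ℂ E]
    {F G : Submodule ℂ E} (hF : IsClosed (F : Set E)) [FiniteDimensional ℂ G] :
    IsClosed ((F ⊔ G : Submodule ℂ E) : Set E) := by
  haveI : IsClosed (F : Set E) := hF
  have h : (F ⊔ G : Submodule ℂ E) = Submodule.comap F.mkQ (G.map F.mkQ) := by
    rw [Submodule.comap_map_eq, Submodule.ker_mkQ, sup_comm]
  rw [h]
  haveI : FiniteDimensional ℂ (G.map F.mkQ) := Module.Finite.map G F.mkQ
  exact (Submodule.closed_of_finiteDimensional (G.map F.mkQ)).preimage continuous_quot_mk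

lemma fredholm_left {B : Type*} [NormedAddCommGroup B] [NormedSpace ℂ B]
    [CompleteSpace B] (K : B →L[ℂ] B) (hK : IsCompactOperator K) :
    ∃ (E : B →L[ℂ] B) (π : B →L[ℂ] B), FiniteDimensional ℂ (LinearMap.range (π : B →ₗ[ℂ] B)) ∧
      ∀ v : B, E ((1 - K) v) = v - π v := by
  classical
  set A : B →L[ℂ] B := 1 - K with hA
  have hAv : ∀ v, A v = v - K v := fun v => rfl
  set V₀ : Submodule ℂ B := LinearMap.ker (A : B →ₗ[ℂ] B) with hV₀
  have hV₀closed : IsClosed (V₀ : Set B) := ContinuousLinearMap.isClosed_ker A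
  -- compact set containing K-images of balls
  obtain ⟨r, hr⟩ : ∃ r : ℝ, IsCompact (closure (K '' Metric.closedBall 0 3)) :=
    ⟨3, hK.isCompact_closure_image_closedBall 3⟩
  have hcpt1 : IsCompact (closure (K '' Metric.closedBall 0 1)) :=
    hK.isCompact_closure_image_closedBall 1
  -- (a) V₀ is finite dimensional
  haveI hfinV₀ : FiniteDimensional ℂ V₀ := by
    set S : Set B := (V₀ : Set B) ∩ Metric.closedBall 0 1 with hS
    have hSclosed : IsClosed S := hV₀closed.inter Metric.isClosed_closedBall
    have hSsub : S ⊆ closure (K '' Metric.closedBall 0 1) := by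
      rintro v ⟨hv1, hv2⟩
      have hAv0 : A v = 0 := hv1
      have hvK : v = K v := by
        have h := hAv v; rw [hAv0] at h
        exact sub_eq_zero.mp h.symm
      exact subset_closure ⟨v, hv2, hvK.symm⟩
    have hScpt : IsCompact S := hcpt1.of_isClosed_subset hSclosed hSsub
    have hball : Metric.closedBall (0 : V₀) 1 = (Subtype.val) ⁻¹' S := by
      ext x
      simp only [Set.mem_preimage, hS, Set.mem_inter_iff, Metric.mem_closedBall,
        dist_zero_right, SetLike.coe_mem, true_and]
      exact ⟨fun h => ⟨x.2, h⟩, fun h => h.2⟩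
    have hcpt : IsCompact (Metric.closedBall (0 : V₀) 1) := by
      rw [hball]
      exact (hV₀closed.isClosedEmbedding_subtypeVal).isCompact_preimage hScpt
    exact FiniteDimensional.of_isCompact_closedBall₀ ℂ one_pos hcpt
  -- (b) continuous projection onto V₀
  obtain ⟨f₀, hf₀⟩ := Submodule.ClosedComplemented.of_finiteDimensional V₀
  set π₀ : B →L[ℂ] B := V₀.subtypeL.comp f₀ with hπ₀def
  have hπ₀mem : ∀ v, π₀ v ∈ V₀ := fun v => (f₀ v).2
  have hπ₀id : ∀ v ∈ V₀, π₀ v = v := by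
    intro v hv
    have := hf₀ ⟨v, hv⟩
    simpa [hπ₀def] using congrArg (Subtype.val) this
  set W₀ : Submodule ℂ B := LinearMap.ker (π₀ : B →ₗ[ℂ] B) with hW₀
  have hW₀closed : IsClosed (W₀ : Set B) := ContinuousLinearMap.isClosed_ker π₀
  have hsub : ∀ v : B, v - π₀ v ∈ W₀ := by
    intro v
    simp only [hW₀, LinearMap.mem_ker, ContinuousLinearMap.coe_coe, map_sub]
    rw [hπ₀id _ (hπ₀mem v), sub_self]
  have hAπ₀ : ∀ v, A (π₀ v) = 0 := fun v => hπ₀mem v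
  have htriv : ∀ v : B, v ∈ V₀ → v ∈ W₀ → v = 0 := by
    intro v h1 h2
    have : π₀ v = 0 := h2
    rw [← hπ₀id v h1, this]
  -- (c) lower bound on W₀
  obtain ⟨c, hc, hlow⟩ : ∃ c : ℝ, 0 < c ∧ ∀ v ∈ W₀, c * ‖v‖ ≤ ‖A v‖ := by
    by_contra h
    push_neg at h
    -- produce unit vectors in W₀ with small A-image
    have key : ∀ n : ℕ, ∃ u : B, u ∈ W₀ ∧ ‖u‖ = 1 ∧ ‖A u‖ < 1 / (n + 1) := by
      intro n
      obtain ⟨v, hvW, hv⟩ := h (1 / (n + 1)) (by positivity)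
      have hv0 : v ≠ 0 := by
        rintro rfl
        simp at hv
      have hnv : ‖((‖v‖ : ℂ))⁻¹‖ = ‖v‖⁻¹ := by
        rw [norm_inv, Complex.norm_real, Real.norm_eq_abs, abs_of_nonneg (norm_nonneg v)]
      refine ⟨((‖v‖ : ℂ))⁻¹ • v, W₀.smul_mem _ hvW, ?_, ?_⟩
      · rw [norm_smul, hnv, inv_mul_cancel₀ (norm_ne_zero_iff.mpr hv0)]
      · rw [map_smul, norm_smul, hnv]
        rw [inv_mul_lt_iff₀ (norm_pos_iff.mpr hv0)]
        rw [mul_comm]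
        exact hv
    choose u huW hu1 huA using key
    have humem : ∀ n, K (u n) ∈ closure (K '' Metric.closedBall 0 1) := by
      intro n
      exact subset_closure ⟨u n, by simp [Metric.mem_closedBall, dist_zero_right, (hu1 n).le], rfl⟩
    obtain ⟨w, hw, φ, hφ, hconv⟩ := hcpt1.tendsto_subseq humem
    have hA0 : Filter.Tendsto (fun n => A (u (φ n))) Filter.atTop (nhds 0) := by
      rw [Metric.tendsto_atTop]
      intro ε hε
      obtain ⟨n₀, hn₀⟩ := exists_nat_one_div_lt hε
      refine ⟨n₀, fun n hn => ?_⟩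
      rw [dist_zero_right]
      calc ‖A (u (φ n))‖ < 1 / (φ n + 1) := huA _
        _ ≤ 1 / (n₀ + 1) := by
            gcongr
            exact_mod_cast le_trans (le_trans hn (Nat.le_of_lt_succ (Nat.lt_succ_of_le (le_refl _)))) (StrictMono.le_apply hφ)
        _ < ε := hn₀
    have huconv : Filter.Tendsto (fun n => u (φ n)) Filter.atTop (nhds w) := by
      have heq : ∀ n, u (φ n) = A (u (φ n)) + K (u (φ n)) := by
        intro n; rw [hAv, sub_add_cancel]
      have h2 := hA0.add hconv
      rw [zero_add] at h2
      exact h2.congr (fun n => (heq n).symm)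
    have hwW : w ∈ W₀ := hW₀closed.mem_of_tendsto huconv (Filter.Eventually.of_forall fun n => huW _)
    have hwA : A w = 0 := by
      have h1 : Filter.Tendsto (fun n => A (u (φ n))) Filter.atTop (nhds (A w)) :=
        (A.continuous.tendsto w).comp huconv
      exact tendsto_nhds_unique h1 hA0
    have hw1 : ‖w‖ = 1 := by
      have h1 : Filter.Tendsto (fun n => ‖u (φ n)‖) Filter.atTop (nhds ‖w‖) :=
        (continuous_norm.tendsto w).comp huconv
      simp_rw [hu1] at h1
      exact (tendsto_nhds_unique tendsto_const_nhds h1).symm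
    rw [htriv w (LinearMap.mem_ker.mpr hwA) hwW] at hw1
    simp at hw1
  -- (d) range of A is closed
  set R : Submodule ℂ B := LinearMap.range (A : B →ₗ[ℂ] B) with hR
  have hRA : ∀ v : B, A v = A (v - π₀ v) := by
    intro v; rw [map_sub, hAπ₀, sub_zero]
  have hRclosed : IsClosed (R : Set B) := by
    set A' : W₀ →L[ℂ] B := A.comp W₀.subtypeL with hA'
    have hanti : AntilipschitzWith (⟨c⁻¹, by positivity⟩ : NNReal) A' := by
      apply ContinuousLinearMap.antilipschitz_of_bound
      intro x
      have hx := hlow x x.2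
      rw [← le_div_iff₀' hc] at hx
      calc ‖x‖ ≤ ‖A (x : B)‖ / c := hx
        _ = c⁻¹ * ‖A' x‖ := by rw [div_eq_inv_mul]; rfl
    haveI : CompleteSpace W₀ := hW₀closed.completeSpace_coe
    have hclosedrange : IsClosed (Set.range A') :=
      hanti.isClosed_range A'.uniformContinuous
    have heqr : ((LinearMap.range (A : B →ₗ[ℂ] B) : Submodule ℂ B) : Set B) = Set.range A' := by
      ext z
      constructor
      · rintro ⟨v, rfl⟩
        exact ⟨⟨v - π₀ v, hsub v⟩, (hRA v).symm⟩
      · rintro ⟨w, rfl⟩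
        exact ⟨(w : B), rfl⟩
    rw [hR]
    rw [heqr]
    exact hclosedrange
  -- (e) finite codimension
  haveI hquot : FiniteDimensional ℂ (B ⧸ R) := by
    by_contra hinf
    -- any extension of R by finitely many vectors is a closed proper subspace
    have hFclosed : ∀ t : Finset B, IsClosed ((R ⊔ Submodule.span ℂ (t : Set B) : Submodule ℂ B) : Set B) := by
      intro t
      haveI : FiniteDimensional ℂ (Submodule.span ℂ (t : Set B)) :=
        FiniteDimensional.span_finset ℂ t
      exact isClosed_sup_of_fd hRclosed
    have hFne : ∀ t : Finset B, ∃ x : B, x ∉ (R ⊔ Submodule.span ℂ (t : Set B) : Submodule ℂ B) := by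
      intro t
      by_contra hx
      push_neg at hx
      have htop : (R ⊔ Submodule.span ℂ (t : Set B) : Submodule ℂ B) = ⊤ :=
        Submodule.eq_top_iff'.mpr hx
      apply hinf
      have hmap : Submodule.span ℂ (R.mkQ '' (t : Set B)) = ⊤ := by
        have h1 := congrArg (Submodule.map R.mkQ) htop
        rw [Submodule.map_sup, Submodule.map_top, Submodule.range_mkQ, Submodule.map_span] at h1
        have h2 : Submodule.map R.mkQ R = ⊥ := by
          rw [eq_bot_iff]
          rintro q ⟨r, hr, rfl⟩
          simp [Submodule.mem_bot, Submodule.mkQ_apply, Submodule.Quotient.mk_eq_zero]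
          exact hr
        rw [h2, bot_sup_eq] at h1
        exact h1
      have : FiniteDimensional ℂ (B ⧸ R) := by
        have hfg : (⊤ : Submodule ℂ (B ⧸ R)).FG := by
          rw [← hmap]
          exact Submodule.fg_span ((t : Set B).toFinite.image _)
        exact Module.finite_def.mpr hfg
      exact this
    -- Riesz choice
    have hpick : ∀ t : Finset B, ∃ x : B, ‖x‖ ≤ 3 ∧
        ∀ y ∈ (R ⊔ Submodule.span ℂ (t : Set B) : Submodule ℂ B), 1 ≤ ‖x - y‖ := by
      intro t
      have h2 : (1 : ℝ) < ‖(2 : ℂ)‖ := by norm_num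
      have h3 : ‖(2 : ℂ)‖ < (3 : ℝ) := by norm_num
      exact riesz_lemma_of_norm_lt h2 h3 (hFclosed t) (hFne t)
    choose x hx3 hx1 using hpick
    -- the chain of finsets
    let g : ℕ → Finset B := fun n => Nat.rec ∅ (fun _ t => insert (x t) t) n
    have hg_succ : ∀ n, g (n + 1) = insert (x (g n)) (g n) := fun n => rfl
    have hg_mono : ∀ m n, m ≤ n → g m ⊆ g n := by
      have : Monotone g := monotone_nat_of_le_succ (fun n => by
        rw [hg_succ]; exact Finset.subset_insert _ _)
      exact fun m n h => this h
    set u : ℕ → B := fun n => x (g n) with hu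
    have humem : ∀ m n, m < n → u m ∈ g n := by
      intro m n h
      have h1 : u m ∈ g (m + 1) := by rw [hg_succ]; exact Finset.mem_insert_self _ _
      exact hg_mono (m + 1) n h h1
    have hsep : ∀ m n, m < n → 1 ≤ ‖K (u n) - K (u m)‖ := by
      intro m n h
      have hthis : 1 ≤ ‖x (g n) - (A (u n) + u m - A (u m))‖ := by
        apply hx1 (g n)
        have h1 : A (u n) ∈ R := hR ▸ LinearMap.mem_range_self _ _
        have h2 : A (u m) ∈ R := hR ▸ LinearMap.mem_range_self _ _
        refine Submodule.sub_mem _ (Submodule.add_mem _ ?_ ?_) ?_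
        · exact Submodule.mem_sup_left h1
        · exact Submodule.mem_sup_right
            (Submodule.subset_span (Finset.mem_coe.mpr (humem m n h)))
        · exact Submodule.mem_sup_left h2
      have heq : x (g n) - (A (u n) + u m - A (u m)) = K (u n) - K (u m) := by
        show u n - (A (u n) + u m - A (u m)) = K (u n) - K (u m)
        rw [hAv, hAv]; abel
      rwa [heq] at hthis
    -- pigeonhole against total boundedness
    have hKmem : ∀ n, K (u n) ∈ closure (K '' Metric.closedBall 0 3) := by
      intro n
      exact subset_closure ⟨u n, by simpa [Metric.mem_closedBall, dist_zero_right] using hx3 (g n), rfl⟩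
    obtain ⟨t, htfin, htcov⟩ := (Metric.totallyBounded_iff.mp hr.totallyBounded) (1/2) (by norm_num)
    have hch : ∀ n : ℕ, ∃ y ∈ t, K (u n) ∈ Metric.ball y (1/2) := by
      intro n
      have := htcov (hKmem n)
      simpa using this
    choose ψ hψt hψball using hch
    obtain ⟨m, -, n, -, hmn, heq⟩ :=
      Set.infinite_univ.exists_ne_map_eq_of_mapsTo (fun n _ => hψt n) htfin
    rcases lt_or_gt_of_ne hmn with h | h
    · have h1 := hsep m n h
      have h2 : dist (K (u n)) (K (u m)) < 1 := by
        calc dist (K (u n)) (K (u m)) ≤ dist (K (u n)) (ψ n) + dist (ψ m) (K (u m)) := by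
              rw [heq]; exact dist_triangle _ _ _
          _ < 1/2 + 1/2 := by
              apply add_lt_add
              · exact Metric.mem_ball.mp (hψball n)
              · rw [dist_comm]; exact Metric.mem_ball.mp (hψball m)
          _ = 1 := by norm_num
      rw [dist_eq_norm] at h2
      linarith
    · have h1 := hsep n m h
      have h2 : dist (K (u m)) (K (u n)) < 1 := by
        calc dist (K (u m)) (K (u n)) ≤ dist (K (u m)) (ψ m) + dist (ψ n) (K (u n)) := by
              rw [← heq]; exact dist_triangle _ _ _
          _ < 1/2 + 1/2 := by
              apply add_lt_add
              · exact Metric.mem_ball.mp (hψball m)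
              · rw [dist_comm]; exact Metric.mem_ball.mp (hψball n)
          _ = 1 := by norm_num
      rw [dist_eq_norm] at h2
      linarith
  -- (f) complement of R, and the iso W₀ ≃ R
  obtain ⟨fR, hfR⟩ := Submodule.ClosedComplemented.of_quotient_finiteDimensional hRclosed
  haveI : CompleteSpace W₀ := hW₀closed.completeSpace_coe
  haveI : CompleteSpace R := hRclosed.completeSpace_coe
  set A'' : W₀ →L[ℂ] R :=
    (A.comp W₀.subtypeL).codRestrict R (fun w => LinearMap.mem_range_self _ _) with hA''
  have hA''inj : LinearMap.ker (A'' : W₀ →ₗ[ℂ] R) = ⊥ := by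
    rw [LinearMap.ker_eq_bot']
    intro w hw
    have : A (w : B) = 0 := by
      have := congrArg (Subtype.val) hw
      exact this
    exact Subtype.ext (htriv w this w.2)
  have hA''surj : LinearMap.range (A'' : W₀ →ₗ[ℂ] R) = ⊤ := by
    rw [LinearMap.range_eq_top]
    rintro ⟨x, v, hv⟩
    refine ⟨⟨v - π₀ v, hsub v⟩, ?_⟩
    apply Subtype.ext
    show A (v - π₀ v) = x
    rw [← hRA v, ← hv]; rfl
  set e := ContinuousLinearEquiv.ofBijective A'' hA''inj hA''surj with he
  refine ⟨W₀.subtypeL.comp (e.symm.toContinuousLinearMap.comp fR), π₀, ?_, ?_⟩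
  · have hle : LinearMap.range (π₀ : B →ₗ[ℂ] B) ≤ V₀ := by
      rintro x ⟨v, rfl⟩; exact hπ₀mem v
    exact Submodule.finiteDimensional_of_le hle
  · intro v
    have hmem : A v ∈ R := LinearMap.mem_range_self _ _
    have h1 : fR (A v) = ⟨A v, hmem⟩ := by
      have := hfR ⟨A v, hmem⟩
      simpa using this
    have h2 : e ⟨v - π₀ v, hsub v⟩ = ⟨A v, hmem⟩ := by
      apply Subtype.ext
      have : (e ⟨v - π₀ v, hsub v⟩ : B) = A ((⟨v - π₀ v, hsub v⟩ : W₀) : B) := rfl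
      rw [this]
      exact (hRA v).symm
    have h3 : e.symm ⟨A v, hmem⟩ = ⟨v - π₀ v, hsub v⟩ := by
      rw [← h2, ContinuousLinearEquiv.symm_apply_apply]
    show (W₀.subtypeL (e.symm.toContinuousLinearMap (fR ((1 - K) v))) : B) = v - π₀ v
    rw [show ((1:B →L[ℂ] B) - K) v = A v from rfl, h1]
    change ((e.symm ⟨A v, hmem⟩ : W₀) : B) = v - π₀ v
    rw [h3]

/-- If `μ s₀` is left-invertible modulo compact operators, then the homogeneous system
`μ s v = 0` is locally of finite type near `s₀`. -/
theorem stmt_1 {N : ℕ} {M : Set (Fin N → ℂ)} (hM : IsOpen M) (hMne : M.Nonempty)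
    {B C : Type*} [NormedAddCommGroup B] [NormedSpace ℂ B] [CompleteSpace B]
    [NormedAddCommGroup C] [NormedSpace ℂ C] [CompleteSpace C]
    (μ : (Fin N → ℂ) → (B →L[ℂ] C)) (hμ : AnalyticOnNhd ℂ μ M)
    (s₀ : Fin N → ℂ) (hs₀ : s₀ ∈ M)
    (D : C →L[ℂ] B) (K : B →L[ℂ] B) (hK : IsCompactOperator K)
    (hDK : ∀ v : B, D (μ s₀ v) = v - K v) :
    ∃ W : Set (Fin N → ℂ), IsOpen W ∧ s₀ ∈ W ∧ W ⊆ M ∧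
      ∃ (k : ℕ) (e : Fin k → (Fin N → ℂ) → B),
        (∀ j, AnalyticOnNhd ℂ (e j) W) ∧
        ∀ s ∈ W, {v : B | μ s v = 0} ⊆
          (Submodule.span ℂ (Set.range fun j => e j s) : Set B) := by
  classical
  obtain ⟨E, π, hfin, hEπ⟩ := fredholm_left K hK
  have hED : ∀ v : B, E (D (μ s₀ v)) = v - π v := by
    intro v
    have : D (μ s₀ v) = (1 - K) v := by
      rw [hDK v]; rfl
    rw [this, hEπ v]
  -- the analytic family of operators
  set Φ : (B →L[ℂ] C) →L[ℂ] (B →L[ℂ] B) :=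
    ContinuousLinearMap.compL ℂ B C B (E.comp D) with hΦ
  set G : (Fin N → ℂ) → (B →L[ℂ] B) := fun s => 1 + Φ (μ s - μ s₀) with hG
  have hΦap : ∀ (T : B →L[ℂ] C) (w : B), Φ T w = E (D (T w)) := by
    intro T w
    rw [hΦ, ContinuousLinearMap.compL_apply]
    rfl
  have hGanal : AnalyticOnNhd ℂ G M := by
    apply AnalyticOnNhd.add analyticOnNhd_const
    exact Φ.comp_analyticOnNhd (hμ.sub analyticOnNhd_const)
  have hGcont : ContinuousOn (fun s => Φ (μ s - μ s₀)) M :=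
    ((Φ.comp_analyticOnNhd (hμ.sub analyticOnNhd_const)).continuousOn)
  set W : Set (Fin N → ℂ) :=
    M ∩ (fun s => Φ (μ s - μ s₀)) ⁻¹' (Metric.ball 0 1) with hW
  have hWopen : IsOpen W := hGcont.isOpen_inter_preimage hM Metric.isOpen_ball
  have hs₀W : s₀ ∈ W := by
    constructor
    · exact hs₀
    · simp [Metric.mem_ball]
  have hWM : W ⊆ M := Set.inter_subset_left
  -- units
  have hunit : ∀ s ∈ W, ‖-(Φ (μ s - μ s₀))‖ < 1 := by
    intro s hs
    rw [norm_neg]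
    have := hs.2
    simpa [Metric.mem_ball, dist_zero_right] using this
  -- basis of range π
  set k := Module.finrank ℂ (LinearMap.range (π : B →ₗ[ℂ] B)) with hk
  haveI := hfin
  set b := Module.finBasis ℂ (LinearMap.range (π : B →ₗ[ℂ] B)) with hb
  refine ⟨W, hWopen, hs₀W, hWM,
    k, fun j s => Ring.inverse (G s) ((b j : B)), ?_, ?_⟩
  · intro j s hs
    have h1 : AnalyticAt ℂ G s := hGanal s (hWM hs)
    have h2 : AnalyticAt ℂ Ring.inverse (G s) := by
      have hu := hunit s hs
      have : G s = ((Units.oneSub _ hu)⁻¹⁻¹ : (B →L[ℂ] B)ˣ) := by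
        rw [inv_inv, Units.val_oneSub, sub_neg_eq_add]
      rw [this]
      exact analyticAt_inverse _
    exact ((ContinuousLinearMap.apply ℂ B ((b j : B))).analyticAt _).comp (h2.comp h1)
  · intro s hs v hv
    simp only [Set.mem_setOf_eq] at hv
    set u : (B →L[ℂ] B)ˣ := Units.oneSub _ (hunit s hs) with hu
    have huval : (u : B →L[ℂ] B) = G s := by
      rw [hu, Units.val_oneSub, sub_neg_eq_add]
    have hGv : G s v = π v := by
      have h1 : Φ (μ s - μ s₀) v = E (D (μ s v)) - E (D (μ s₀ v)) := by
        rw [map_sub, ContinuousLinearMap.sub_apply, hΦap, hΦap]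
      have h2 : G s v = v + Φ (μ s - μ s₀) v := by
        rw [hG]
        simp only [ContinuousLinearMap.add_apply, ContinuousLinearMap.one_apply]
      rw [h2, h1, hv, hED v, map_zero, map_zero]
      abel
    have hvinv : v = (↑u⁻¹ : B →L[ℂ] B) (π v) := by
      have h3 : (↑u⁻¹ : B →L[ℂ] B) (G s v) = v := by
        rw [← huval]
        have := u.inv_mul
        calc (↑u⁻¹ : B →L[ℂ] B) ((u : B →L[ℂ] B) v)
            = ((↑u⁻¹ * ↑u : B →L[ℂ] B)) v := rfl
          _ = v := by rw [this]; rfl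
      rw [← hGv, h3]
    have hπmem : π v ∈ Submodule.span ℂ (Set.range fun j => ((b j : B))) := by
      have h4 : (⟨π v, LinearMap.mem_range_self _ _⟩ : LinearMap.range (π : B →ₗ[ℂ] B)) ∈
          (⊤ : Submodule ℂ (LinearMap.range (π : B →ₗ[ℂ] B))) := trivial
      rw [← b.span_eq] at h4
      have h5 := Submodule.apply_mem_span_image_of_mem_span
        ((LinearMap.range (π : B →ₗ[ℂ] B)).subtype) h4
      rw [← Set.range_comp] at h5
      exact h5
    have h6 := Submodule.apply_mem_span_image_of_mem_span
      ((↑u⁻¹ : B →L[ℂ] B) : B →ₗ[ℂ] B) hπmem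
    rw [← Set.range_comp] at h6
    have h7 : v ∈ Submodule.span ℂ
        (Set.range fun j => (↑u⁻¹ : B →L[ℂ] B) ((b j : B))) := by
      rw [hvinv]
      exact h6
    have h8 : (fun j => Ring.inverse (G s) ((b j : B))) =
        fun j => (↑u⁻¹ : B →L[ℂ] B) ((b j : B)) := by
      funext j
      rw [← huval, Ring.inverse_unit]
    rw [h8]
    exact h7
end

section
/- Fredholm's criterion: Let M be a nonempty open subset of ℂ^N, let B and C be complex Banach spaces, let μ : M → (B →L[ℂ] C) be analytic, and fix s₀ ∈ M. Suppose B = B₁ ⊕ B₂ is a topological direct sum of two closed subspaces, with continuous linear projections p₁ : B → B₁ and p₂ : B → B₂. Assume: (a) the restriction of μ(s₀) to B₁ is left-invertible modulo compact operators, i.e. there exist a continuous linear operator D : C → B₁ and a compact continuous linear operator K : B₁ → B₁ such that D(μ(s₀) v) = v − K v for all v ∈ B₁; and (b) the family of sets p₂(ker μ(s)) is locally of finite type at s₀, i.e. there exist an open neighborhood W₀ of s₀, an integer m ≥ 0 and analytic maps f_1, …, f_m : W₀ → B₂ with p₂(ker μ(s)) ⊆ span_ℂ{f_1(s), …, f_m(s)}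 for all s ∈ W₀. Then ker μ(s) is locally of finite type at s₀: there exist an open neighborhood W ⊆ M of s₀, an integer k ≥ 0 and analytic maps e_1, …, e_k : W → B such that ker μ(s) ⊆ span_ℂ{e_1(s), …, e_k(s)} for all s ∈ W. -/
set_option maxHeartbeats 1000000

open Metric Set Filter Topology

section FredholmAux

variable {E : Type*} [NormedAddCommGroup E] [NormedSpace ℂ E]

/-- Riesz theory I: the kernel of `1 - K` (`K` compact) is finite dimensional. -/
lemma fredholm_aux_ker (T Kop : E →L[ℂ] E) (hK : IsCompactOperator (Kop : E →ₗ[ℂ] E))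
    (hTK : ∀ v, T v + Kop v = v) :
    FiniteDimensional ℂ (LinearMap.ker (T : E →ₗ[ℂ] E)) := by
  obtain ⟨C, hCc, hC⟩ := hK.image_closedBall_subset_compact 1
  set N : Submodule ℂ E := LinearMap.ker (T : E →ₗ[ℂ] E) with hN
  have hNcl : IsClosed (N : Set E) := ContinuousLinearMap.isClosed_ker T
  have himg : (Subtype.val '' closedBall (0 : N) 1) = (N : Set E) ∩ closedBall 0 1 := by
    ext x
    constructor
    · rintro ⟨v, hv, rfl⟩
      refine ⟨v.2, ?_⟩
      simpa [mem_closedBall, dist_zero_right] using hv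
    · rintro ⟨hxN, hx⟩
      exact ⟨⟨x, hxN⟩, by simpa [mem_closedBall, dist_zero_right] using hx, rfl⟩
  have hsub : (N : Set E) ∩ closedBall 0 1 ⊆ C := by
    rintro x ⟨hxN, hxb⟩
    have hTx : T x = 0 := hxN
    have hxK : Kop x = x := by
      have := hTK x
      rwa [hTx, zero_add] at this
    exact hC ⟨x, hxb, hxK⟩
  have hcmp : IsCompact ((N : Set E) ∩ closedBall 0 1) :=
    hCc.of_isClosed_subset (hNcl.inter Metric.isClosed_closedBall) hsub
  have hball : IsCompact (closedBall (0 : N) 1) := by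
    rw [Subtype.isCompact_iff]
    rwa [himg]
  exact FiniteDimensional.of_isCompact_closedBall₀ ℂ one_pos hball

/-- Riesz theory II: the range of `1 - K` (`K` compact) is closed. -/
lemma fredholm_aux_range [CompleteSpace E] (T Kop : E →L[ℂ] E)
    (hK : IsCompactOperator (Kop : E →ₗ[ℂ] E)) (hTK : ∀ v, T v + Kop v = v) :
    IsClosed ((LinearMap.range (T : E →ₗ[ℂ] E) : Submodule ℂ E) : Set E) := by
  haveI : FiniteDimensional ℂ (LinearMap.ker (T : E →ₗ[ℂ] E)) := fredholm_aux_ker T Kop hK hTK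
  obtain ⟨X, hXcl, hNX⟩ :=
    (Submodule.ClosedComplemented.of_finiteDimensional (LinearMap.ker (T : E →ₗ[ℂ] E))).exists_isClosed_isCompl
  -- `T` is bounded below on `X`
  have hbb : ∃ c : ℝ, 0 ≤ c ∧ ∀ x ∈ X, ‖x‖ ≤ c * ‖T x‖ := by
    by_contra hcon
    push_neg at hcon
    obtain ⟨C, hCc, hC⟩ := hK.image_closedBall_subset_compact 1
    choose xfun hxX hxlt using fun k : ℕ => hcon ((k : ℝ) + 1) (by positivity)
    have hxpos : ∀ k, (0 : ℝ) < ‖xfun k‖ := by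
      intro k
      have := hxlt k
      nlinarith [norm_nonneg (T (xfun k)), norm_nonneg (xfun k)]
    set u : ℕ → E := fun k => ‖xfun k‖⁻¹ • xfun k with hu
    have hu1 : ∀ k, ‖u k‖ = 1 := by
      intro k
      simp [hu, norm_smul, inv_mul_cancel₀ (hxpos k).ne']
    have huX : ∀ k, u k ∈ X := fun k => X.smul_mem _ (hxX k)
    have huT : ∀ k, ‖T (u k)‖ ≤ 1 / ((k : ℝ) + 1) := by
      intro k
      have hlt := hxlt k
      have hk1 : (0 : ℝ) < (k : ℝ) + 1 := by positivity
      have heq : ‖T (u k)‖ = ‖xfun k‖⁻¹ * ‖T (xfun k)‖ := by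
        simp [hu, norm_smul]
      rw [heq]
      have hTle : ‖T (xfun k)‖ ≤ ‖xfun k‖ / ((k : ℝ) + 1) :=
        (le_div_iff₀ hk1).mpr (by nlinarith)
      calc ‖xfun k‖⁻¹ * ‖T (xfun k)‖ ≤ ‖xfun k‖⁻¹ * (‖xfun k‖ / ((k : ℝ) + 1)) :=
            mul_le_mul_of_nonneg_left hTle (inv_nonneg.mpr (hxpos k).le)
        _ = 1 / ((k : ℝ) + 1) := by
            rw [div_eq_mul_inv, ← mul_assoc, inv_mul_cancel₀ (hxpos k).ne', one_mul,
              one_div]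
    have hKu : ∀ k, Kop (u k) ∈ C := fun k =>
      hC ⟨u k, by simp [mem_closedBall, dist_zero_right, (hu1 k).le], rfl⟩
    obtain ⟨y, hyC, φ, hφ, hconv⟩ := hCc.tendsto_subseq hKu
    have hTu0 : Tendsto (fun k => T (u (φ k))) atTop (𝓝 0) := by
      refine squeeze_zero_norm (fun k => ?_) tendsto_one_div_add_atTop_nhds_zero_nat
      refine (huT (φ k)).trans ?_
      have h1 : (k : ℝ) + 1 ≤ (φ k : ℝ) + 1 := by
        have h2 : (k : ℝ) ≤ (φ k : ℝ) := Nat.cast_le.mpr hφ.le_apply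
        linarith
      exact one_div_le_one_div_of_le (by positivity) h1
    have huy : Tendsto (fun k => u (φ k)) atTop (𝓝 y) := by
      have heq : (fun k => u (φ k)) = fun k => T (u (φ k)) + Kop (u (φ k)) :=
        funext fun k => (hTK _).symm
      rw [heq]
      simpa using hTu0.add hconv
    have hyX : y ∈ X := hXcl.mem_of_tendsto huy (Eventually.of_forall fun k => huX _)
    have hy1 : ‖y‖ = 1 :=
      tendsto_nhds_unique huy.norm (by simpa [hu1] using
        (tendsto_const_nhds : Tendsto (fun _ : ℕ => (1 : ℝ)) atTop (𝓝 1)))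
    have hyT : T y = 0 :=
      tendsto_nhds_unique ((T.continuous.tendsto y).comp huy) hTu0
    have hy0 : y = 0 := by
      have hdisj := hNX.disjoint
      exact (Submodule.disjoint_def.mp hdisj) y hyT hyX
    rw [hy0, norm_zero] at hy1
    norm_num at hy1
  obtain ⟨c, hc0, hc⟩ := hbb
  haveI : CompleteSpace X := hXcl.completeSpace_coe
  set G : X →L[ℂ] E := T.comp X.subtypeL with hG
  have hanti : AntilipschitzWith c.toNNReal G := by
    apply AntilipschitzWith.of_le_mul_dist
    intro x y
    have hmem : ((x : E) - (y : E)) ∈ X := X.sub_mem x.2 y.2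
    have := hc _ hmem
    simp only [dist_eq_norm]
    calc ‖x - y‖ = ‖(x : E) - (y : E)‖ := rfl
      _ ≤ c * ‖T ((x : E) - (y : E))‖ := this
      _ = c.toNNReal * ‖G x - G y‖ := by
          rw [Real.coe_toNNReal c hc0]
          congr 1
          simp [hG, map_sub]
  have hclosed : IsClosed (Set.range G) := hanti.isClosed_range G.uniformContinuous
  have hset : ((LinearMap.range (T : E →ₗ[ℂ] E) : Submodule ℂ E) : Set E) = Set.range G := by
    ext w
    constructor
    · rintro ⟨v, rfl⟩
      have hv : v ∈ LinearMap.ker (T : E →ₗ[ℂ] E) ⊔ X := by rw [hNX.sup_eq_top]; trivial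
      obtain ⟨a, haN, b, hbX, rfl⟩ := Submodule.mem_sup.mp hv
      refine ⟨⟨b, hbX⟩, ?_⟩
      have haT : T a = 0 := haN
      simp [hG, map_add, haT]
    · rintro ⟨x, rfl⟩
      exact ⟨(x : E), rfl⟩
  rw [hset]
  exact hclosed

/-- Riesz theory III: the cokernel of `1 - K` (`K` compact) is finite dimensional. -/
lemma fredholm_aux_coker [CompleteSpace E] (T Kop : E →L[ℂ] E)
    (hK : IsCompactOperator (Kop : E →ₗ[ℂ] E)) (hTK : ∀ v, T v + Kop v = v) :
    FiniteDimensional ℂ (E ⧸ (LinearMap.range (T : E →ₗ[ℂ] E) : Submodule ℂ E)) := by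
  classical
  set R : Submodule ℂ E := LinearMap.range (T : E →ₗ[ℂ] E) with hR
  haveI hRcl : IsClosed (R : Set E) := fredholm_aux_range T Kop hK hTK
  obtain ⟨C, hCc, hC⟩ := hK.image_closedBall_subset_compact 1
  obtain ⟨t, htf, htC⟩ := (Metric.totallyBounded_iff.mp hCc.totallyBounded) (1/4) (by norm_num)
  haveI : FiniteDimensional ℂ (Submodule.span ℂ t) := FiniteDimensional.span_of_finite ℂ htf
  set q : E →ₗ[ℂ] E ⧸ R := R.mkQ with hq
  have hqcont : Continuous q := continuous_quot_mk
  haveI : FiniteDimensional ℂ (Submodule.map q (Submodule.span ℂ t)) :=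
    Module.Finite.map _ _
  set V : Submodule ℂ E := R ⊔ Submodule.span ℂ t with hV
  have hVcl : IsClosed (V : Set E) := by
    have hVeq : V = Submodule.comap q (Submodule.map q (Submodule.span ℂ t)) := by
      rw [Submodule.comap_map_eq, Submodule.ker_mkQ, sup_comm]
    have heq2 : (V : Set E) = q ⁻¹' ((Submodule.map q (Submodule.span ℂ t)) : Set (E ⧸ R)) := by
      rw [hVeq]; rfl
    rw [heq2]
    exact ((Submodule.map q (Submodule.span ℂ t)).closed_of_finiteDimensional).preimage hqcont
  -- V = ⊤ by the Riesz lemma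
  have hVtop : V = ⊤ := by
    by_contra hne
    obtain ⟨x, hx⟩ : ∃ x : E, x ∉ V := by
      by_contra hall
      push_neg at hall
      exact hne (Submodule.eq_top_iff'.mpr hall)
    obtain ⟨x₀, hx₀V, hx₀⟩ := riesz_lemma hVcl ⟨x, hx⟩ (r := 3/4) (by norm_num)
    have hx₀ne : x₀ ≠ 0 := fun h => hx₀V (h ▸ V.zero_mem)
    have hx₀pos : (0 : ℝ) < ‖x₀‖ := norm_pos_iff.mpr hx₀ne
    set u : E := ‖x₀‖⁻¹ • x₀ with hudef
    have hu1 : ‖u‖ = 1 := by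
      simp [hudef, norm_smul, inv_mul_cancel₀ hx₀pos.ne']
    have hdist : ∀ y ∈ V, (3/4 : ℝ) ≤ ‖u - y‖ := by
      intro y hy
      have h1 : (‖x₀‖ • y) ∈ V := V.smul_mem _ hy
      have h2 := hx₀ _ h1
      have h3 : u - y = ‖x₀‖⁻¹ • (x₀ - ‖x₀‖ • y) := by
        rw [smul_sub, smul_smul, inv_mul_cancel₀ hx₀pos.ne', one_smul, hudef]
      rw [h3, norm_smul, norm_inv, norm_norm]
      calc (3/4 : ℝ) = ‖x₀‖⁻¹ * (3/4 * ‖x₀‖) := by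
            field_simp
        _ ≤ ‖x₀‖⁻¹ * ‖x₀ - ‖x₀‖ • y‖ :=
            mul_le_mul_of_nonneg_left h2 (inv_nonneg.mpr hx₀pos.le)
    have hKu : Kop u ∈ C := hC ⟨u, by simp [mem_closedBall, dist_zero_right, hu1.le], rfl⟩
    obtain ⟨v, hvt, hvball⟩ : ∃ v ∈ t, Kop u ∈ ball v (1/4) := by
      have := htC hKu
      simpa using this
    have hyV : T u + v ∈ V := by
      apply Submodule.add_mem
      · exact Submodule.mem_sup_left ⟨u, rfl⟩
      · exact Submodule.mem_sup_right (Submodule.subset_span hvt)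
    have hlt : ‖u - (T u + v)‖ < 1/4 := by
      have heq3 : u - (T u + v) = Kop u - v := by
        have h4 := hTK u
        have h5 : Kop u = u - T u := eq_sub_of_add_eq' h4
        rw [h5]
        abel
      rw [heq3]
      have := mem_ball_iff_norm.mp hvball
      linarith [this]
    have := hdist _ hyV
    linarith
  -- conclude
  have hmap : Submodule.map q (Submodule.span ℂ t) = ⊤ := by
    have h1 : Submodule.map q V = ⊤ := by
      rw [hVtop, Submodule.map_top, Submodule.range_mkQ]
    rw [hV, Submodule.map_sup] at h1
    have h2 : Submodule.map q R = ⊥ := by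
      ext z
      simp only [Submodule.mem_map, Submodule.mem_bot]
      constructor
      · rintro ⟨r, hr, rfl⟩
        simpa [hq, Submodule.mkQ_apply, Submodule.Quotient.mk_eq_zero] using hr
      · rintro rfl
        exact ⟨0, R.zero_mem, map_zero q⟩
    rw [h2, bot_sup_eq] at h1
    exact h1
  have htop : FiniteDimensional ℂ (⊤ : Submodule ℂ (E ⧸ R)) := by
    rw [← hmap]; infer_instance
  exact Module.Finite.equiv (Submodule.topEquiv)

end FredholmAux

/-- **Fredholm's criterion.** Suppose `B = B₁ ⊕ B₂` is a topological direct sum of closed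
subspaces, the restriction of `μ s₀` to `B₁` is left-invertible modulo compact operators,
and `p₂ (ker μ s)` is locally of finite type at `s₀`. Then `ker μ s` is locally of finite
type at `s₀`. -/
theorem stmt_2 {N : ℕ} {M : Set (Fin N → ℂ)} (hM : IsOpen M)
    {B C : Type*} [NormedAddCommGroup B] [NormedSpace ℂ B] [CompleteSpace B]
    [NormedAddCommGroup C] [NormedSpace ℂ C] [CompleteSpace C]
    (μ : (Fin N → ℂ) → (B →L[ℂ] C)) (hμ : AnalyticOnNhd ℂ μ M)
    (s₀ : Fin N → ℂ) (hs₀ : s₀ ∈ M)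
    -- `B = B₁ ⊕ B₂`, a topological direct sum of closed subspaces, with continuous
    -- linear projections `p₁`, `p₂`
    (B₁ B₂ : Submodule ℂ B) (hB₁ : IsClosed (B₁ : Set B)) (hB₂ : IsClosed (B₂ : Set B))
    (hcompl : IsCompl B₁ B₂)
    (p₁ p₂ : B →L[ℂ] B)
    (hp₁ : ∀ x : B, p₁ x ∈ B₁) (hp₂ : ∀ x : B, p₂ x ∈ B₂)
    (hp₁eq : ∀ x ∈ B₁, p₁ x = x) (hp₂eq : ∀ x ∈ B₂, p₂ x = x)
    (hsum : ∀ x : B, p₁ x + p₂ x = x)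
    -- (a) the restriction of `μ s₀` to `B₁` is left-invertible modulo compact operators
    (D : C →L[ℂ] B₁) (K : B₁ →L[ℂ] B₁) (hK : IsCompactOperator K)
    (hDK : ∀ v : B₁, D (μ s₀ (v : B)) = v - K v)
    -- (b) the family `p₂ (ker μ s)` is locally of finite type at `s₀`
    (m : ℕ) (W₀ : Set (Fin N → ℂ)) (hW₀ : IsOpen W₀) (hs₀W₀ : s₀ ∈ W₀) (hW₀M : W₀ ⊆ M)
    (f : Fin m → (Fin N → ℂ) → B₂)
    (hf : ∀ j, AnalyticOnNhd ℂ (f j) W₀)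
    (hker2 : ∀ s ∈ W₀, ∀ x : B, μ s x = 0 →
      p₂ x ∈ (Submodule.span ℂ (Set.range fun j => ((f j s : B))) : Set B)) :
    ∃ W : Set (Fin N → ℂ), IsOpen W ∧ s₀ ∈ W ∧ W ⊆ M ∧
      ∃ (k : ℕ) (e : Fin k → (Fin N → ℂ) → B),
        (∀ j, AnalyticOnNhd ℂ (e j) W) ∧
        ∀ s ∈ W, {x : B | μ s x = 0} ⊆
          (Submodule.span ℂ (Set.range fun j => e j s) : Set B) := by
  classical
  haveI hBc : CompleteSpace B₁ := hB₁.completeSpace_coe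
  -- the analytic family `A s = D ∘ μ s ∘ incl : B₁ → B₁`, with `A s₀ = 1 - K`
  set A : (Fin N → ℂ) → (B₁ →L[ℂ] B₁) := fun s => D.comp ((μ s).comp B₁.subtypeL) with hAdef
  have hA0 : ∀ v : B₁, A s₀ v + K v = v := by
    intro v
    have h1 : A s₀ v = v - K v := hDK v
    rw [h1]
    exact sub_add_cancel v (K v)
  have hK' : IsCompactOperator ((K : B₁ →L[ℂ] B₁) : B₁ →ₗ[ℂ] B₁) := hK
  have hA : AnalyticOnNhd ℂ A M := by
    intro s hs
    let Λ : (B →L[ℂ] C) →L[ℂ] (B₁ →L[ℂ] B₁) :=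
      ((ContinuousLinearMap.compL ℂ B₁ C B₁) D).comp
        ((ContinuousLinearMap.compL ℂ B₁ B C).flip B₁.subtypeL)
    have h2 : AnalyticAt ℂ Λ (μ s) :=
      ContinuousLinearMap.analyticAt (𝕜 := ℂ) (E := B →L[ℂ] C) (F := ↥B₁ →L[ℂ] ↥B₁) Λ (μ s)
    have h3 : AnalyticAt ℂ (fun s' => Λ (μ s')) s := h2.comp (hμ s hs)
    exact h3.congr (by filter_upwards with s' using rfl)
  -- Riesz theory for `A s₀ = 1 - K`
  set Nk : Submodule ℂ B₁ := LinearMap.ker (A s₀ : B₁ →ₗ[ℂ] B₁) with hNkdef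
  haveI hkerFD : FiniteDimensional ℂ Nk := fredholm_aux_ker (A s₀) K hK' hA0
  obtain ⟨π, hπ⟩ := Submodule.ClosedComplemented.of_finiteDimensional Nk
  set Rg : Submodule ℂ B₁ := LinearMap.range (A s₀ : B₁ →ₗ[ℂ] B₁) with hRgdef
  have hRcl : IsClosed (Rg : Set B₁) := fredholm_aux_range (A s₀) K hK' hA0
  haveI hcokerFD : FiniteDimensional ℂ (B₁ ⧸ Rg) := fredholm_aux_coker (A s₀) K hK' hA0
  have hRcc : Rg.ClosedComplemented :=
    Submodule.ClosedComplemented.of_quotient_finiteDimensional hRcl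
  obtain ⟨Y, hYcl, hRY⟩ := hRcc.exists_isClosed_isCompl
  haveI : CompleteSpace Y := hYcl.completeSpace_coe
  -- the invertible augmented (Grushin) operator at `s₀`
  set Fop : (B₁ × Y) →L[ℂ] (B₁ × Nk) :=
    ContinuousLinearMap.prod
      (((A s₀).comp (ContinuousLinearMap.fst ℂ B₁ Y)) +
        (Y.subtypeL.comp (ContinuousLinearMap.snd ℂ B₁ Y)))
      (π.comp (ContinuousLinearMap.fst ℂ B₁ Y)) with hFopdef
  have hFop_apply : ∀ (v : B₁) (y : Y), Fop (v, y) = (A s₀ v + (y : B₁), π v) :=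
    fun v y => rfl
  have hFinj : LinearMap.ker (Fop : (B₁ × Y) →ₗ[ℂ] (B₁ × Nk)) = ⊥ := by
    rw [LinearMap.ker_eq_bot']
    rintro ⟨v, y⟩ h
    have h' : Fop (v, y) = 0 := h
    rw [hFop_apply] at h'
    have h1 : A s₀ v + (y : B₁) = 0 := congrArg Prod.fst h'
    have h2 : π v = 0 := congrArg Prod.snd h'
    have hAv : A s₀ v ∈ Y := by
      have he : A s₀ v = -(y : B₁) := eq_neg_of_add_eq_zero_left h1
      rw [he]
      exact Y.neg_mem y.2
    have hAv0 : A s₀ v = 0 :=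
      (Submodule.disjoint_def.mp hRY.disjoint) _ ⟨v, rfl⟩ hAv
    have hy0 : y = 0 := by
      have : (y : B₁) = 0 := by
        rw [hAv0, zero_add] at h1
        exact h1
      exact Subtype.ext this
    have hvNk : v ∈ Nk := hAv0
    have hπv : π v = ⟨v, hvNk⟩ := hπ ⟨v, hvNk⟩
    have hv0 : v = 0 := by
      have h3 : (⟨v, hvNk⟩ : Nk) = 0 := by rw [← hπv, h2]
      exact congrArg Subtype.val h3
    rw [Prod.ext_iff]
    exact ⟨hv0, hy0⟩
  have hFsurj : LinearMap.range (Fop : (B₁ × Y) →ₗ[ℂ] (B₁ × Nk)) = ⊤ := by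
    rw [LinearMap.range_eq_top]
    rintro ⟨w, z⟩
    have hw : w ∈ Rg ⊔ Y := by rw [hRY.sup_eq_top]; trivial
    obtain ⟨a, ⟨v₀, rfl⟩, b, hbY, hab⟩ := Submodule.mem_sup.mp hw
    refine ⟨(v₀ - ((π v₀ : Nk) : B₁) + ((z : Nk) : B₁), ⟨b, hbY⟩), ?_⟩
    show Fop _ = (w, z)
    rw [hFop_apply]
    have hA1 : A s₀ (((π v₀ : Nk) : B₁)) = 0 := (π v₀).2
    have hA2 : A s₀ (((z : Nk) : B₁)) = 0 := z.2
    have hfst : A s₀ (v₀ - ((π v₀ : Nk) : B₁) + ((z : Nk) : B₁)) + b = w := by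
      rw [map_add, map_sub, hA1, hA2]
      simpa using hab
    have hsnd : π (v₀ - ((π v₀ : Nk) : B₁) + ((z : Nk) : B₁)) = z := by
      rw [map_add, map_sub, hπ (π v₀), hπ z]
      abel
    rw [Prod.ext_iff]
    exact ⟨hfst, hsnd⟩
  set Feq := ContinuousLinearEquiv.ofBijective Fop hFinj hFsurj with hFeqdef
  set S₀ : (B₁ × Nk) →L[ℂ] B₁ :=
    (ContinuousLinearMap.fst ℂ B₁ Y).comp (Feq.symm : (B₁ × Nk) →L[ℂ] (B₁ × Y)) with hS₀def
  have hS₀ : ∀ v : B₁, S₀ (A s₀ v, π v) = v := by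
    intro v
    have h1 : Feq (v, (0 : Y)) = (A s₀ v, π v) := by
      show Fop (v, 0) = _
      rw [hFop_apply]
      simp
    have h2 : Feq.symm (A s₀ v, π v) = (v, 0) := by
      rw [← h1, ContinuousLinearEquiv.symm_apply_apply]
    show (ContinuousLinearMap.fst ℂ B₁ Y) (Feq.symm (A s₀ v, π v)) = v
    rw [h2]
    rfl
  -- the analytic family `V s` with `V s₀ = 1`
  set V : (Fin N → ℂ) → (B₁ →L[ℂ] B₁) := fun s => S₀.comp ((A s).prod π) with hVdef
  have hV_apply : ∀ s v, V s v = S₀ (A s v, π v) := fun s v => rfl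
  have hV1 : V s₀ = 1 := by
    ext v
    rw [hV_apply, hS₀ v]
    rfl
  have hVan : AnalyticOnNhd ℂ V M := by
    have hdecomp : V = fun s =>
        ((ContinuousLinearMap.compL ℂ B₁ B₁ B₁)
          (S₀.comp (ContinuousLinearMap.inl ℂ B₁ Nk))) (A s) +
        (S₀.comp (ContinuousLinearMap.inr ℂ B₁ Nk)).comp π := by
      funext s
      ext v
      rw [hV_apply]
      simp only [ContinuousLinearMap.add_apply, ContinuousLinearMap.compL_apply,
        ContinuousLinearMap.comp_apply, ContinuousLinearMap.inl_apply,
        ContinuousLinearMap.inr_apply]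
      rw [← map_add]
      congr 1
      rw [Prod.mk_add_mk, add_zero, zero_add]
    rw [hdecomp]
    intro s hs
    exact ((((ContinuousLinearMap.compL ℂ B₁ B₁ B₁)
      (S₀.comp (ContinuousLinearMap.inl ℂ B₁ Nk))).analyticAt (A s)).comp (hA s hs)).add
      analyticAt_const
  -- the neighbourhood `W`
  set W : Set (Fin N → ℂ) := M ∩ (W₀ ∩ V ⁻¹' {U : B₁ →L[ℂ] B₁ | IsUnit U}) with hWdef
  have hWopen : IsOpen W := by
    rw [isOpen_iff_mem_nhds]
    rintro s ⟨hsM, hsW₀, hsU⟩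
    have h1 : M ∈ 𝓝 s := hM.mem_nhds hsM
    have h2 : W₀ ∈ 𝓝 s := hW₀.mem_nhds hsW₀
    have hop : IsOpen {U : B₁ →L[ℂ] B₁ | IsUnit U} := Units.isOpen (R := B₁ →L[ℂ] B₁)
    have h3 : V ⁻¹' {U : B₁ →L[ℂ] B₁ | IsUnit U} ∈ 𝓝 s :=
      (hVan s hsM).continuousAt.preimage_mem_nhds (hop.mem_nhds hsU)
    exact inter_mem h1 (inter_mem h2 h3)
  have hs₀W : s₀ ∈ W := ⟨hs₀, hs₀W₀, by
    simp only [Set.mem_preimage, mem_setOf_eq, hV1]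
    exact isUnit_one⟩
  -- the spanning sections
  set n : ℕ := Module.finrank ℂ Nk with hn
  set bN : Module.Basis (Fin n) ℂ Nk := Module.finBasis ℂ Nk with hbN
  set hsec : Fin m → (Fin N → ℂ) → B₁ := fun j s => D (μ s ((f j s : B₂) : B)) with hhsec
  set gsec : Fin m → (Fin N → ℂ) → B₁ :=
    fun j s => Ring.inverse (V s) (S₀ (hsec j s, 0)) with hgsec
  set wsec : Fin n → (Fin N → ℂ) → B₁ :=
    fun i s => Ring.inverse (V s) (S₀ (0, bN i)) with hwsec
  set e₀ : (Fin m ⊕ (Fin m ⊕ Fin n)) → (Fin N → ℂ) → B :=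
    Sum.elim (fun j s => ((f j s : B₂) : B))
      (Sum.elim (fun j s => ((gsec j s : B₁) : B)) (fun i s => ((wsec i s : B₁) : B))) with he₀
  set η : (Fin m ⊕ (Fin m ⊕ Fin n)) ≃ Fin (m + (m + n)) :=
    (Equiv.sumCongr (Equiv.refl (Fin m)) finSumFinEquiv).trans finSumFinEquiv with hη
  set e : Fin (m + (m + n)) → (Fin N → ℂ) → B := fun t => e₀ (η.symm t) with he
  have he₀e : ∀ u, e₀ u = e (η u) := by
    intro u
    rw [he]
    simp
  refine ⟨W, hWopen, hs₀W, inter_subset_left, m + (m + n), e, ?_, ?_⟩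
  · -- analyticity of the sections
    have hmain : ∀ u : Fin m ⊕ (Fin m ⊕ Fin n), AnalyticOnNhd ℂ (e₀ u) W := by
      rintro (j | j | i) s hs <;> obtain ⟨hsM, hsW₀, hsU⟩ := hs
      · exact (B₂.subtypeL.analyticAt _).comp (hf j s hsW₀)
      · -- g sections
        have hμs : AnalyticAt ℂ μ s := hμ s hsM
        have hfj : AnalyticAt ℂ (fun s' => ((f j s' : B₂) : B)) s :=
          (B₂.subtypeL.analyticAt _).comp (hf j s hsW₀)
        have happ : AnalyticAt ℂ (fun s' => μ s' ((f j s' : B₂) : B)) s :=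
          AnalyticAt.comp₂
            ((ContinuousLinearMap.id ℂ (B →L[ℂ] C)).analyticAt_bilinear
              (μ s, ((f j s : B₂) : B))) hμs hfj
        have hh : AnalyticAt ℂ (hsec j) s := (D.analyticAt _).comp happ
        have hpair : AnalyticAt ℂ (fun s' => S₀ (hsec j s', (0 : Nk))) s :=
          (S₀.analyticAt _).comp (hh.prod analyticAt_const)
        have hVin : AnalyticAt ℂ (fun s' => Ring.inverse (V s')) s := by
          have h1 : AnalyticAt ℂ (Ring.inverse : (B₁ →L[ℂ] B₁) → (B₁ →L[ℂ] B₁)) (V s) := by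
            have := analyticAt_inverse (𝕜 := ℂ) (A := B₁ →L[ℂ] B₁) hsU.unit
            rwa [IsUnit.unit_spec] at this
          exact h1.comp (hVan s hsM)
        exact (B₁.subtypeL.analyticAt _).comp
          (AnalyticAt.comp₂
            ((ContinuousLinearMap.id ℂ (B₁ →L[ℂ] B₁)).analyticAt_bilinear
              (Ring.inverse (V s), S₀ (hsec j s, 0))) hVin hpair)
      · -- w sections
        have hVin : AnalyticAt ℂ (fun s' => Ring.inverse (V s')) s := by
          have h1 : AnalyticAt ℂ (Ring.inverse : (B₁ →L[ℂ] B₁) → (B₁ →L[ℂ] B₁)) (V s) := by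
            have := analyticAt_inverse (𝕜 := ℂ) (A := B₁ →L[ℂ] B₁) hsU.unit
            rwa [IsUnit.unit_spec] at this
          exact h1.comp (hVan s hsM)
        exact (B₁.subtypeL.analyticAt _).comp
          (AnalyticAt.comp₂
            ((ContinuousLinearMap.id ℂ (B₁ →L[ℂ] B₁)).analyticAt_bilinear
              (Ring.inverse (V s), S₀ (0, bN i))) hVin analyticAt_const)
    intro t
    have := hmain (η.symm t)
    rwa [he₀e (η.symm t), Equiv.apply_symm_apply] at this
  · -- the kernel is contained in the span
    rintro s ⟨hsM, hsW₀, hsU⟩ x hx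
    rw [mem_setOf_eq] at hx
    rw [SetLike.mem_coe]
    set v : B₁ := ⟨p₁ x, hp₁ x⟩ with hv
    have hp2span := hker2 s hsW₀ x hx
    rw [SetLike.mem_coe, Submodule.mem_span_range_iff_exists_fun] at hp2span
    obtain ⟨c, hc⟩ := hp2span
    have hvcoe : (v : B) = x - p₂ x := eq_sub_of_add_eq (hsum x)
    have hμv : μ s (v : B) = -(∑ j, c j • μ s ((f j s : B₂) : B)) := by
      rw [hvcoe, map_sub, hx, zero_sub, ← hc]
      rw [map_sum]
      congr 1
      exact Finset.sum_congr rfl fun j _ => (μ s).map_smul _ _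
    have hAv : A s v = -(∑ j, c j • hsec j s) := by
      have h1 : A s v = D (μ s (v : B)) := rfl
      rw [h1, hμv, map_neg, map_sum]
      congr 1
      exact Finset.sum_congr rfl fun j _ => D.map_smul _ _
    set d : Fin n → ℂ := fun i => bN.repr (π v) i with hd'
    have hd : ∑ i, d i • bN i = π v := bN.sum_repr (π v)
    have hkey : v = -(∑ j, c j • gsec j s) + ∑ i, d i • wsec i s := by
      have hu : (Ring.inverse (V s)) * (V s) = 1 := Ring.inverse_mul_cancel _ hsU
      have h1 : Ring.inverse (V s) (V s v) = v := by
        have h2 := congrArg (fun (T : B₁ →L[ℂ] B₁) => T v) hu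
        simpa using h2
      have h2 : V s v = -(∑ j, c j • S₀ (hsec j s, 0)) + ∑ i, d i • S₀ (0, bN i) := by
        rw [hV_apply]
        have e1 : ((A s v, π v) : B₁ × Nk)
            = -(∑ j, c j • ((hsec j s, (0 : Nk)) : B₁ × Nk))
              + ∑ i, d i • (((0 : B₁), bN i) : B₁ × Nk) := by
          rw [hAv, ← hd]
          refine Prod.ext ?_ ?_ <;>
            simp [Prod.fst_sum, Prod.snd_sum, Prod.smul_mk]
        rw [e1, map_add, map_neg, map_sum, map_sum]
        simp only [map_smul]
      rw [← h1, h2, map_add, map_neg, map_sum, map_sum]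
      simp only [map_smul]
      rfl
    have hxdec : x = (v : B) + p₂ x := by
      conv_lhs => rw [← hsum x]
    have hvB : (v : B) = -(∑ j, c j • ((gsec j s : B₁) : B))
        + ∑ i, d i • ((wsec i s : B₁) : B) := by
      have h3 := congrArg (B₁.subtypeL) hkey
      simpa [map_add, map_neg, map_sum, map_smul] using h3
    rw [hxdec, hvB, ← hc]
    refine Submodule.add_mem _ (Submodule.add_mem _ (Submodule.neg_mem _
      (Submodule.sum_mem _ fun j _ => Submodule.smul_mem _ _ ?_))
      (Submodule.sum_mem _ fun i _ => Submodule.smul_mem _ _ ?_))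
      (Submodule.sum_mem _ fun j _ => Submodule.smul_mem _ _ ?_)
    · exact Submodule.subset_span ⟨η (Sum.inr (Sum.inl j)), by
        show e (η (Sum.inr (Sum.inl j))) s = _
        rw [← he₀e]
        rfl⟩
    · exact Submodule.subset_span ⟨η (Sum.inr (Sum.inr i)), by
        show e (η (Sum.inr (Sum.inr i))) s = _
        rw [← he₀e]
        rfl⟩
    · exact Submodule.subset_span ⟨η (Sum.inl j), by
        show e (η (Sum.inl j)) s = _
        rw [← he₀e]
        rfl⟩
end

section
/- Let n ≥ 1, let λ_1, …, λ_n be pairwise distinct complex numbers, and let P_1, …, P_n be nonzero polynomials with complex coefficients. If the function f : ℝ → ℂ defined by f(x) = Σ_{i=1}^n e^{λ_i x} · P_i(x) is bounded on ℝ, then Re λ_i = 0 for every i. -/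
open Polynomial

private lemma exists_exp_ne_one (z : ℂ) (hz : z ≠ 0) : ∃ h : ℝ, Complex.exp (z * h) ≠ 1 := by
  by_contra hcon
  push_neg at hcon
  obtain ⟨n, hn⟩ := Complex.exp_eq_one_iff.mp (by simpa using hcon 1)
  have hn0 : n ≠ 0 := by rintro rfl; simp at hn; exact hz hn
  obtain ⟨m, hm⟩ := Complex.exp_eq_one_iff.mp (hcon (1 / (2 * n)))
  rw [hn] at hm
  have h2pi : (2 * Real.pi * Complex.I : ℂ) ≠ 0 := by
    simp [Real.pi_ne_zero, Complex.I_ne_zero]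
  have hnC : (n : ℂ) ≠ 0 := Int.cast_ne_zero.mpr hn0
  have h1 : ((n : ℂ) * (1 / (2 * n))) * (2 * Real.pi * Complex.I)
      = m * (2 * Real.pi * Complex.I) := by
    push_cast at hm ⊢
    linear_combination hm
  have h2 := mul_right_cancel₀ h2pi h1
  have h3 : (n : ℂ) * (1 / (2 * n)) = 1 / 2 := by field_simp
  rw [h3] at h2
  have h4 : ((2 * m : ℤ) : ℂ) = ((1 : ℤ) : ℂ) := by push_cast; linear_combination -2 * h2
  have := Int.cast_injective (α := ℂ) h4
  omega

private lemma lc_taylor (h : ℂ) (P : ℂ[X]) :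
    (Polynomial.taylor h P).leadingCoeff = P.leadingCoeff := by
  rcases eq_or_ne P.natDegree 0 with hd | hd
  · obtain ⟨a, rfl⟩ := Polynomial.natDegree_eq_zero.mp hd
    simp
  · rw [Polynomial.taylor_apply, Polynomial.leadingCoeff_comp (by simp)]
    simp [Polynomial.leadingCoeff_X_add_C]

private lemma taylor_sub_lt (h : ℂ) (P : ℂ[X]) (hne : Polynomial.taylor h P - P ≠ 0) :
    (Polynomial.taylor h P - P).natDegree < P.natDegree := by
  have hP : P ≠ 0 := by rintro rfl; simp at hne
  have hT : Polynomial.taylor h P ≠ 0 := fun h0 => hP (Polynomial.taylor_injective h (by simp [h0]))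
  have hdeg : (Polynomial.taylor h P).degree = P.degree := by
    rw [Polynomial.degree_eq_natDegree hT, Polynomial.degree_eq_natDegree hP,
      Polynomial.natDegree_taylor]
  have := Polynomial.degree_sub_lt hdeg hT (lc_taylor h P)
  rw [hdeg] at this
  have := Polynomial.natDegree_lt_natDegree hne this
  simpa using this

private lemma taylor_one_sub_ne (P : ℂ[X]) (hd : P.natDegree ≠ 0) :
    Polynomial.taylor (1 : ℂ) P - P ≠ 0 := by
  intro h0
  have hper : Polynomial.taylor (1 : ℂ) P = P := sub_eq_zero.mp h0
  have hstep : ∀ x : ℂ, P.eval (x + 1) = P.eval x := by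
    intro x
    have := congrArg (Polynomial.eval x) hper
    rwa [Polynomial.taylor_eval] at this
  have hnat : ∀ k : ℕ, P.eval (k : ℂ) = P.eval 0 := by
    intro k
    induction k with
    | zero => simp
    | succ k ih => push_cast; rw [hstep]; exact ih
  have hroot : (P - Polynomial.C (P.eval 0)) = 0 := by
    apply Polynomial.eq_zero_of_infinite_isRoot
    apply Set.Infinite.mono (s := Set.range (Nat.cast : ℕ → ℂ))
    · rintro x ⟨k, rfl⟩
      simp [Polynomial.IsRoot, hnat k]
    · exact Set.infinite_range_of_injective Nat.cast_injective
  have : P = Polynomial.C (P.eval 0) := by linear_combination hroot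
  rw [this] at hd
  simp at hd

private lemma re_eq_zero_of_bounded (lam : ℂ) (c : ℂ) (hc : c ≠ 0) (C : ℝ)
    (hb : ∀ x : ℝ, ‖Complex.exp (lam * x) * c‖ ≤ C) : lam.re = 0 := by
  by_contra hre
  have habs : ∀ x : ℝ, Real.exp (lam.re * x) * ‖c‖ ≤ C := by
    intro x
    have := hb x
    rwa [norm_mul, Complex.norm_exp, show (lam * (x : ℂ)).re = lam.re * x by simp] at this
  have hc0 : 0 < ‖c‖ := norm_pos_iff.mpr hc
  have hC : ‖c‖ ≤ C := by simpa using habs 0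
  have hCpos : 0 < C := lt_of_lt_of_le hc0 hC
  set t : ℝ := C / ‖c‖ with ht
  have htpos : 0 < t := div_pos hCpos hc0
  set x : ℝ := (Real.log t + 1) / lam.re with hx
  have hxx : lam.re * x = Real.log t + 1 := by
    rw [hx, mul_div_cancel₀ _ hre]
  have := habs x
  rw [hxx, Real.exp_add, Real.exp_log htpos] at this
  have he : (2 : ℝ) ≤ Real.exp 1 := by
    have := Real.add_one_le_exp 1; linarith
  have : t * Real.exp 1 * ‖c‖ ≤ C := this
  rw [ht] at this
  rw [div_mul_eq_mul_div, div_mul_eq_mul_div, mul_div_assoc] at this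
  rw [div_self (ne_of_gt hc0), mul_one] at this
  nlinarith

private lemma abs_sub_le'' (a b : ℂ) : ‖a - b‖ ≤ ‖a‖ + ‖b‖ := by
  simpa [sub_eq_add_neg] using norm_add_le a (-b)

private lemma key_const (lam : ℂ) (P : ℂ[X]) (hP : P ≠ 0) (hd : P.natDegree = 0)
    (hb : ∃ C : ℝ, ∀ x : ℝ, ‖Complex.exp (lam * x) * P.eval (x : ℂ)‖ ≤ C) :
    lam.re = 0 := by
  obtain ⟨a, rfl⟩ := Polynomial.natDegree_eq_zero.mp hd
  obtain ⟨C, hb⟩ := hb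
  exact re_eq_zero_of_bounded lam a (by simpa using hP) C (by simpa using hb)

private lemma key : ∀ N : ℕ, ∀ (lam : ℂ) (P : ℂ[X]) (s : Finset ℂ) (Q : ℂ → ℂ[X]),
    P ≠ 0 → lam ∉ s → (∀ μ ∈ s, Q μ ≠ 0) →
    (∑ μ ∈ s, ((Q μ).natDegree + 1)) + P.natDegree ≤ N →
    (∃ C : ℝ, ∀ x : ℝ, ‖Complex.exp (lam * x) * P.eval (x : ℂ)
        + ∑ μ ∈ s, Complex.exp (μ * x) * (Q μ).eval (x : ℂ)‖ ≤ C) →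
    lam.re = 0 := by
  intro N
  induction N with
  | zero =>
    intro lam P s Q hP hlams hQ hN hb
    have hs : s = ∅ := by
      by_contra hne
      obtain ⟨μ, hμ⟩ := Finset.nonempty_iff_ne_empty.mpr hne
      have h1 : (Q μ).natDegree + 1 ≤ ∑ μ ∈ s, ((Q μ).natDegree + 1) :=
        Finset.single_le_sum (f := fun μ => (Q μ).natDegree + 1) (fun _ _ => Nat.zero_le _) hμ
      omega
    subst hs
    simp only [Finset.sum_empty] at hN
    have hd : P.natDegree = 0 := by omega
    obtain ⟨C, hb⟩ := hb
    exact key_const lam P hP hd ⟨C, fun x => by simpa using hb x⟩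
  | succ N IH =>
    intro lam P s Q hP hlams hQ hN hb
    classical
    rcases s.eq_empty_or_nonempty with rfl | ⟨μ0, hμ0⟩
    · rcases eq_or_ne P.natDegree 0 with hd | hd
      · obtain ⟨C, hb⟩ := hb
        exact key_const lam P hP hd ⟨C, fun x => by simpa using hb x⟩
      · obtain ⟨C, hb⟩ := hb
        simp only [Finset.sum_empty, add_zero] at hb hN
        set P1 : ℂ[X] := Complex.exp lam • (Polynomial.taylor (1 : ℂ) P - P) with hP1
        have hsub := taylor_one_sub_ne P hd
        have hP1ne : P1 ≠ 0 := smul_ne_zero (Complex.exp_ne_zero lam) hsub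
        have hdeg1 : P1.natDegree < P.natDegree := by
          calc P1.natDegree ≤ (Polynomial.taylor (1 : ℂ) P - P).natDegree :=
                Polynomial.natDegree_smul_le _ _
            _ < P.natDegree := taylor_sub_lt 1 P hsub
        apply IH lam P1 ∅ Q hP1ne (by simp) (by simp) (by simp; omega)
        refine ⟨C + ‖Complex.exp lam‖ * C, fun x => ?_⟩
        have heq : Complex.exp (lam * x) * P1.eval (x : ℂ)
            = Complex.exp (lam * ((x + 1 : ℝ) : ℂ)) * P.eval ((x + 1 : ℝ) : ℂ)
              - Complex.exp lam * (Complex.exp (lam * x) * P.eval (x : ℂ)) := by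
          have hc : ((x + 1 : ℝ) : ℂ) = (x : ℂ) + 1 := by push_cast; ring
          rw [hc, hP1]
          simp only [Polynomial.eval_smul, Polynomial.eval_sub, smul_eq_mul,
            Polynomial.taylor_eval, mul_add, mul_one, Complex.exp_add]
          ring
        rw [Finset.sum_empty, add_zero, heq]
        calc ‖_‖
            ≤ ‖Complex.exp (lam * ((x + 1 : ℝ) : ℂ)) * P.eval ((x + 1 : ℝ) : ℂ)‖
              + ‖Complex.exp lam * (Complex.exp (lam * x) * P.eval (x : ℂ))‖ :=
              abs_sub_le'' _ _
          _ ≤ C + ‖Complex.exp lam‖ * C :=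
              add_le_add (hb (x + 1))
                (by rw [norm_mul]
                    exact mul_le_mul_of_nonneg_left (hb x) (norm_nonneg _))
    · obtain ⟨C, hb⟩ := hb
      have hzne : lam - μ0 ≠ 0 := sub_ne_zero.mpr (by rintro rfl; exact hlams hμ0)
      obtain ⟨h, hh⟩ := exists_exp_ne_one _ hzne
      have hexp_ne : Complex.exp (lam * h) ≠ Complex.exp (μ0 * h) := by
        intro he
        apply hh
        rw [sub_mul, Complex.exp_sub, he, div_self (Complex.exp_ne_zero _)]
      set e0 : ℂ := Complex.exp (μ0 * h) with he0
      set P' : ℂ[X] := Complex.exp (lam * h) • Polynomial.taylor (h : ℂ) P - e0 • P with hP'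
      set Q' : ℂ → ℂ[X] :=
        fun μ => Complex.exp (μ * h) • Polynomial.taylor (h : ℂ) (Q μ) - e0 • Q μ with hQ'
      set s' : Finset ℂ := s.filter (fun μ => Q' μ ≠ 0) with hs'
      have hlc : P.coeff P.natDegree ≠ 0 := by
        rw [← Polynomial.leadingCoeff]; exact Polynomial.leadingCoeff_ne_zero.mpr hP
      have htc : (Polynomial.taylor (h : ℂ) P).coeff P.natDegree = P.coeff P.natDegree := by
        conv_lhs => rw [show P.natDegree = (Polynomial.taylor (h : ℂ) P).natDegree from
          (Polynomial.natDegree_taylor P _).symm]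
        rw [← Polynomial.leadingCoeff, lc_taylor, Polynomial.leadingCoeff]
      have hcoeff : P'.coeff P.natDegree
          = (Complex.exp (lam * h) - e0) * P.coeff P.natDegree := by
        rw [hP']
        simp only [Polynomial.coeff_sub, Polynomial.coeff_smul, smul_eq_mul]
        rw [htc]; ring
      have hP'ne : P' ≠ 0 := by
        intro h0
        rw [h0, Polynomial.coeff_zero] at hcoeff
        exact (mul_ne_zero (sub_ne_zero.mpr hexp_ne) hlc) hcoeff.symm
      have hP'deg : P'.natDegree ≤ P.natDegree := by
        rw [hP']
        refine le_trans (Polynomial.natDegree_sub_le _ _) (max_le ?_ ?_)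
        · exact le_trans (Polynomial.natDegree_smul_le _ _)
            (le_of_eq (Polynomial.natDegree_taylor P _))
        · exact Polynomial.natDegree_smul_le _ _
      have hQ'deg : ∀ μ, (Q' μ).natDegree ≤ (Q μ).natDegree := by
        intro μ
        simp only [hQ']
        refine le_trans (Polynomial.natDegree_sub_le _ _) (max_le ?_ ?_)
        · exact le_trans (Polynomial.natDegree_smul_le _ _)
            (le_of_eq (Polynomial.natDegree_taylor _ _))
        · exact Polynomial.natDegree_smul_le _ _
      have hfac : Q' μ0 = e0 • (Polynomial.taylor (h : ℂ) (Q μ0) - Q μ0) := by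
        simp only [hQ', ← he0, smul_sub]
      have hQ'μ0 : Q' μ0 ≠ 0 → (Q' μ0).natDegree < (Q μ0).natDegree := by
        intro hne
        have hsubne : Polynomial.taylor (h : ℂ) (Q μ0) - Q μ0 ≠ 0 := by
          intro h0; apply hne; rw [hfac, h0, smul_zero]
        calc (Q' μ0).natDegree ≤ (Polynomial.taylor (h : ℂ) (Q μ0) - Q μ0).natDegree := by
              rw [hfac]; exact Polynomial.natDegree_smul_le _ _
          _ < (Q μ0).natDegree := taylor_sub_lt _ _ hsubne
      have hmeas : (∑ μ ∈ s', ((Q' μ).natDegree + 1)) + P'.natDegree ≤ N := by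
        have h1 : (∑ μ ∈ s', ((Q' μ).natDegree + 1))
            = ∑ μ ∈ s, (if Q' μ ≠ 0 then (Q' μ).natDegree + 1 else 0) := by
          rw [hs']; exact Finset.sum_filter _ _
        have h2 : ∀ μ ∈ s, (if Q' μ ≠ 0 then (Q' μ).natDegree + 1 else 0)
            ≤ (if μ = μ0 then (Q μ0).natDegree else (Q μ).natDegree + 1) := by
          intro μ hμ
          by_cases hz : Q' μ ≠ 0
          · rw [if_pos hz]
            by_cases hm : μ = μ0
            · subst hm; rw [if_pos rfl]; exact hQ'μ0 hz
            · rw [if_neg hm]; exact Nat.succ_le_succ (hQ'deg μ)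
          · rw [if_neg hz]; exact Nat.zero_le _
        have h3 : (∑ μ ∈ s, (if μ = μ0 then (Q μ0).natDegree else (Q μ).natDegree + 1)) + 1
            ≤ ∑ μ ∈ s, ((Q μ).natDegree + 1) := by
          rw [← Finset.add_sum_erase s _ hμ0,
            ← Finset.add_sum_erase s (fun μ => (Q μ).natDegree + 1) hμ0]
          rw [if_pos rfl]
          have h5 : ∑ μ ∈ s.erase μ0, (if μ = μ0 then (Q μ0).natDegree else (Q μ).natDegree + 1)
              = ∑ μ ∈ s.erase μ0, ((Q μ).natDegree + 1) := by
            apply Finset.sum_congr rfl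
            intro μ hμ
            rw [if_neg (Finset.ne_of_mem_erase hμ)]
          omega
        have h4 := Finset.sum_le_sum h2
        omega
      apply IH lam P' s' Q' hP'ne
        (fun hc => hlams (Finset.mem_of_mem_filter _ hc))
        (fun μ hμ => (Finset.mem_filter.mp hμ).2) hmeas
      refine ⟨C + ‖e0‖ * C, fun x => ?_⟩
      have hsum_eq : (∑ μ ∈ s', Complex.exp (μ * x) * (Q' μ).eval (x : ℂ))
          = ∑ μ ∈ s, Complex.exp (μ * x) * (Q' μ).eval (x : ℂ) := by
        rw [hs']
        apply Finset.sum_filter_of_ne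
        intro μ hμ hfne h0
        exact hfne (by rw [h0]; simp)
      have hterm : ∀ μ ∈ s, Complex.exp (μ * x) * (Q' μ).eval (x : ℂ)
          = Complex.exp (μ * ((x : ℂ) + h)) * (Q μ).eval ((x : ℂ) + h)
            - e0 * (Complex.exp (μ * x) * (Q μ).eval (x : ℂ)) := by
        intro μ _
        simp only [hQ', Polynomial.eval_sub, Polynomial.eval_smul, smul_eq_mul,
          Polynomial.taylor_eval, mul_add, Complex.exp_add]
        ring
      have hA : Complex.exp (lam * x) * P'.eval (x : ℂ)
          = Complex.exp (lam * ((x : ℂ) + h)) * P.eval ((x : ℂ) + h)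
            - e0 * (Complex.exp (lam * x) * P.eval (x : ℂ)) := by
        simp only [hP', Polynomial.eval_sub, Polynomial.eval_smul, smul_eq_mul,
          Polynomial.taylor_eval, mul_add, Complex.exp_add]
        ring
      have hc : ((x + h : ℝ) : ℂ) = (x : ℂ) + (h : ℂ) := by push_cast; ring
      have heq : Complex.exp (lam * x) * P'.eval (x : ℂ)
            + ∑ μ ∈ s, Complex.exp (μ * x) * (Q' μ).eval (x : ℂ)
          = (Complex.exp (lam * ((x + h : ℝ) : ℂ)) * P.eval ((x + h : ℝ) : ℂ)
              + ∑ μ ∈ s, Complex.exp (μ * ((x + h : ℝ) : ℂ)) * (Q μ).eval ((x + h : ℝ) : ℂ))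
            - e0 * (Complex.exp (lam * x) * P.eval (x : ℂ)
              + ∑ μ ∈ s, Complex.exp (μ * x) * (Q μ).eval (x : ℂ)) := by
        rw [hc, Finset.sum_congr rfl hterm, Finset.sum_sub_distrib, hA, ← Finset.mul_sum]
        ring
      rw [hsum_eq, heq]
      calc ‖_‖
          ≤ ‖Complex.exp (lam * ((x + h : ℝ) : ℂ)) * P.eval ((x + h : ℝ) : ℂ)
              + ∑ μ ∈ s, Complex.exp (μ * ((x + h : ℝ) : ℂ)) * (Q μ).eval ((x + h : ℝ) : ℂ)‖
            + ‖e0 * (Complex.exp (lam * x) * P.eval (x : ℂ)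
              + ∑ μ ∈ s, Complex.exp (μ * x) * (Q μ).eval (x : ℂ))‖ := abs_sub_le'' _ _
        _ ≤ C + ‖e0‖ * C :=
            add_le_add (hb (x + h))
              (by rw [norm_mul]
                  exact mul_le_mul_of_nonneg_left (hb x) (norm_nonneg _))

theorem stmt_5 (n : ℕ) (hn : 1 ≤ n) (lam : Fin n → ℂ) (hlam : Function.Injective lam)
    (P : Fin n → Polynomial ℂ) (hP : ∀ i, P i ≠ 0)
    (hbd : ∃ C : ℝ, ∀ x : ℝ,
      ‖∑ i, Complex.exp (lam i * x) * (P i).eval (x : ℂ)‖ ≤ C) :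
    ∀ i, (lam i).re = 0 := by
  classical
  obtain ⟨C, hb⟩ := hbd
  intro i
  set s : Finset ℂ := (Finset.univ.erase i).image lam with hs
  set Q : ℂ → Polynomial ℂ := fun μ => if hμ : ∃ j, lam j = μ then P hμ.choose else 0 with hQdef
  have hQval : ∀ j : Fin n, Q (lam j) = P j := by
    intro j
    have hex : ∃ k, lam k = lam j := ⟨j, rfl⟩
    rw [hQdef]
    simp only [dif_pos hex]
    congr 1
    exact hlam hex.choose_spec
  have hlams : lam i ∉ s := by
    intro hmem
    rw [hs] at hmem
    obtain ⟨j, hj1, hj2⟩ := Finset.mem_image.mp hmem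
    exact (Finset.mem_erase.mp hj1).1 (hlam hj2)
  have hQs : ∀ μ ∈ s, Q μ ≠ 0 := by
    intro μ hμ
    rw [hs] at hμ
    obtain ⟨j, _, rfl⟩ := Finset.mem_image.mp hμ
    rw [hQval j]; exact hP j
  apply key ((∑ μ ∈ s, ((Q μ).natDegree + 1)) + (P i).natDegree) (lam i) (P i) s Q
    (hP i) hlams hQs le_rfl
  refine ⟨C, fun x => ?_⟩
  have hsum : Complex.exp (lam i * x) * (P i).eval (x : ℂ)
        + ∑ μ ∈ s, Complex.exp (μ * x) * (Q μ).eval (x : ℂ)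
      = ∑ j, Complex.exp (lam j * x) * (P j).eval (x : ℂ) := by
    rw [hs, Finset.sum_image (fun a _ b _ hab => hlam hab)]
    have h5 : ∀ j ∈ Finset.univ.erase i, Complex.exp (lam j * x) * (Q (lam j)).eval (x : ℂ)
        = Complex.exp (lam j * x) * (P j).eval (x : ℂ) := fun j _ => by rw [hQval j]
    rw [Finset.sum_congr rfl h5]
    exact Finset.add_sum_erase Finset.univ (fun j => Complex.exp (lam j * x) * (P j).eval (x : ℂ)) (Finset.mem_univ i)
  rw [hsum]
  exact hb x
end

section
/- Let n ≥ 1, let λ_1, …, λ_n be complex numbers that are pairwise distinct modulo 2πiℤ, and let P_1, …, P_n be nonzero polynomials with complex coefficients. If the function f : ℤ → ℂ defined by f(x) = Σ_{i=1}^n e^{λ_i x} · P_i(x) is bounded on ℤ, then Re λ_i = 0 for every i. -/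
open Polynomial

noncomputable section Stmt6Aux

/-- Shift-difference operator: `g ↦ (x ↦ g(x+1) - w·g(x))`. -/
def ashOp (w : ℂ) (g : ℤ → ℂ) : ℤ → ℂ := fun x => g (x + 1) - w * g x

/-- Effect of `ashOp w` on the polynomial part of a term `z^x · Q(x)`. -/
def phiOp (w z : ℂ) (Q : ℂ[X]) : ℂ[X] := C z * Q.comp (X + C 1) - C w * Q

lemma phiOp_eval (w z : ℂ) (Q : ℂ[X]) (t : ℂ) :
    (phiOp w z Q).eval t = z * Q.eval (t + 1) - w * Q.eval t := by
  simp [phiOp, eval_comp]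

lemma phiOp_zero (w z : ℂ) : phiOp w z 0 = 0 := by simp [phiOp]

lemma phiOp_C (w z a : ℂ) : phiOp w z (C a) = C ((z - w) * a) := by
  rw [phiOp, C_comp, ← C_mul, ← C_mul, ← C_sub]
  congr 1
  ring

lemma natDegree_comp_X_add_C (Q : ℂ[X]) : (Q.comp (X + C 1)).natDegree = Q.natDegree := by
  rw [natDegree_comp, natDegree_X_add_C, mul_one]

lemma comp_coeff_top (Q : ℂ[X]) :
    (Q.comp (X + C 1)).coeff Q.natDegree = Q.leadingCoeff := by
  have h1 : (Q.comp (X + C 1)).natDegree = Q.natDegree := natDegree_comp_X_add_C Q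
  have h2 := Polynomial.leadingCoeff_comp (p := Q) (q := X + C 1)
    (by rw [natDegree_X_add_C]; exact one_ne_zero)
  rw [leadingCoeff, h1] at h2
  rw [(monic_X_add_C (1 : ℂ)).leadingCoeff, one_pow, mul_one] at h2
  exact h2

lemma phiOp_natDegree_le (w z : ℂ) (Q : ℂ[X]) : (phiOp w z Q).natDegree ≤ Q.natDegree := by
  refine (natDegree_sub_le _ _).trans (max_le ?_ ?_)
  · exact (natDegree_C_mul_le _ _).trans (natDegree_comp_X_add_C Q).le
  · exact natDegree_C_mul_le _ _

lemma phiOp_ne_zero {w z : ℂ} (hwz : w ≠ z) {Q : ℂ[X]} (hQ : Q ≠ 0) : phiOp w z Q ≠ 0 := by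
  intro h
  have hc := congrArg (fun p => Polynomial.coeff p Q.natDegree) h
  simp only [phiOp, coeff_sub, coeff_C_mul, comp_coeff_top, coeff_zero] at hc
  rw [show Q.coeff Q.natDegree = Q.leadingCoeff from rfl] at hc
  have hzero : (z - w) * Q.leadingCoeff = 0 := by linear_combination hc
  rcases mul_eq_zero.mp hzero with h1 | h1
  · exact hwz (sub_eq_zero.mp h1).symm
  · exact hQ (leadingCoeff_eq_zero.mp h1)

lemma phiOp_self_natDegree_lt {z : ℂ} {Q : ℂ[X]} (hd : Q.natDegree ≠ 0) :
    (phiOp z z Q).natDegree < Q.natDegree := by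
  have hQ0 : Q ≠ 0 := fun h => hd (by simp [h])
  have hcompd : (Q.comp (X + C 1)).natDegree = Q.natDegree := natDegree_comp_X_add_C Q
  have hcomp0 : Q.comp (X + C 1) ≠ 0 := by
    intro h; rw [h] at hcompd; simp at hcompd; exact hd hcompd.symm
  have hsub : Q.comp (X + C 1) - Q = 0 ∨ (Q.comp (X + C 1) - Q).natDegree < Q.natDegree := by
    by_cases h0 : Q.comp (X + C 1) - Q = 0
    · exact Or.inl h0
    · right
      apply Polynomial.natDegree_lt_natDegree h0
      have hdd : (Q.comp (X + C 1)).degree = Q.degree := by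
        rw [degree_eq_natDegree hcomp0, degree_eq_natDegree hQ0, hcompd]
      rw [← hdd]
      apply Polynomial.degree_sub_lt hdd hcomp0
      rw [Polynomial.leadingCoeff_comp (by rw [natDegree_X_add_C]; exact one_ne_zero),
        (monic_X_add_C (1 : ℂ)).leadingCoeff, one_pow, mul_one]
  have heq : phiOp z z Q = C z * (Q.comp (X + C 1) - Q) := by rw [phiOp, mul_sub]
  rcases hsub with h | h
  · rw [heq, h, mul_zero]; simpa using Nat.pos_of_ne_zero hd
  · rw [heq]
    exact lt_of_le_of_lt (natDegree_C_mul_le _ _) h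

lemma phiOp_self_ne_zero {z : ℂ} (hz : z ≠ 0) {Q : ℂ[X]} (hd : Q.natDegree ≠ 0) :
    phiOp z z Q ≠ 0 := by
  intro h
  have hcomp : Q.comp (X + C 1) = Q := by
    have h2 : C z * (Q.comp (X + C 1) - Q) = 0 := by rw [mul_sub]; exact h
    rcases mul_eq_zero.mp h2 with h3 | h3
    · exact absurd (C_eq_zero.mp h3) hz
    · exact sub_eq_zero.mp h3
  have heval : ∀ t : ℂ, Q.eval (t + 1) = Q.eval t := by
    intro t
    conv_rhs => rw [← hcomp]
    simp [eval_comp]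
  have hnat : ∀ k : ℕ, Q.eval (k : ℂ) = Q.eval 0 := by
    intro k
    induction k with
    | zero => simp
    | succ k ih => push_cast; rw [heval]; exact ih
  have hzero : Q - C (Q.eval 0) = 0 := by
    apply Polynomial.eq_zero_of_infinite_isRoot
    apply Set.infinite_of_injective_forall_mem (f := fun k : ℕ => (k : ℂ)) Nat.cast_injective
    intro k
    simp [IsRoot, hnat k]
  have : Q = C (Q.eval 0) := by linear_combination hzero
  exact hd (by rw [this]; simp)

lemma phiOp_iterate_ne_zero {w z : ℂ} (hwz : w ≠ z) (m : ℕ) :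
    ∀ {Q : ℂ[X]}, Q ≠ 0 → (phiOp w z)^[m] Q ≠ 0 := by
  induction m with
  | zero => intro Q hQ; simpa using hQ
  | succ m ih =>
    intro Q hQ
    rw [Function.iterate_succ_apply]
    exact ih (phiOp_ne_zero hwz hQ)

lemma phiOp_iterate_natDegree_le (w z : ℂ) (m : ℕ) (Q : ℂ[X]) :
    ((phiOp w z)^[m] Q).natDegree ≤ Q.natDegree := by
  induction m generalizing Q with
  | zero => simp
  | succ m ih =>
    rw [Function.iterate_succ_apply]
    exact (ih _).trans (phiOp_natDegree_le w z Q)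

lemma phiOp_iterate_zero (w z : ℂ) (m : ℕ) : (phiOp w z)^[m] 0 = 0 :=
  Function.iterate_fixed (phiOp_zero w z) m

lemma phiOp_self_kill (z : ℂ) : ∀ (m : ℕ) (Q : ℂ[X]), Q.natDegree ≤ m →
    (phiOp z z)^[m + 1] Q = 0 := by
  intro m
  induction m with
  | zero =>
    intro Q hQ
    obtain ⟨a, rfl⟩ := Polynomial.natDegree_eq_zero.mp (Nat.le_zero.mp hQ)
    simp [phiOp_C]
  | succ m ih =>
    intro Q hQ
    rw [Function.iterate_succ_apply]
    by_cases h0 : Q.natDegree = 0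
    · obtain ⟨a, rfl⟩ := Polynomial.natDegree_eq_zero.mp (Nat.le_zero.mp h0.le)
      rw [phiOp_C]
      simp only [sub_self, zero_mul, map_zero]
      exact phiOp_iterate_zero _ _ _
    · exact ih _ (by have := phiOp_self_natDegree_lt (z := z) h0; omega)

def isBddFun (g : ℤ → ℂ) : Prop := ∃ C : ℝ, ∀ x : ℤ, ‖g x‖ ≤ C

lemma isBddFun_ashOp {g : ℤ → ℂ} (h : isBddFun g) (w : ℂ) : isBddFun (ashOp w g) := by
  obtain ⟨C, hC⟩ := h
  refine ⟨C + ‖w‖ * C, fun x => ?_⟩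
  have h1 : ‖g (x + 1) - w * g x‖ ≤ ‖g (x + 1)‖ + ‖w * g x‖ := by
    rw [sub_eq_add_neg]
    refine (norm_add_le _ _).trans ?_
    simp
  refine h1.trans ?_
  rw [norm_mul]
  have hw : 0 ≤ ‖w‖ := norm_nonneg w
  exact add_le_add (hC _) (mul_le_mul_of_nonneg_left (hC _) hw)

lemma isBddFun_ashOp_iterate {g : ℤ → ℂ} (h : isBddFun g) (w : ℂ) (m : ℕ) :
    isBddFun ((ashOp w)^[m] g) := by
  induction m with
  | zero => simpa using h
  | succ m ih => rw [Function.iterate_succ_apply']; exact isBddFun_ashOp ih w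

lemma ashOp_single {z : ℂ} (hz : z ≠ 0) (Q : ℂ[X]) (w : ℂ) :
    ashOp w (fun x : ℤ => z ^ x * Q.eval (x : ℂ)) =
      fun x : ℤ => z ^ x * (phiOp w z Q).eval (x : ℂ) := by
  funext x
  simp only [ashOp]
  rw [phiOp_eval, zpow_add_one₀ hz]
  push_cast
  ring

lemma ashOp_single_iterate {z : ℂ} (hz : z ≠ 0) (Q : ℂ[X]) (w : ℂ) (m : ℕ) :
    (ashOp w)^[m] (fun x : ℤ => z ^ x * Q.eval (x : ℂ)) =
      fun x : ℤ => z ^ x * ((phiOp w z)^[m] Q).eval (x : ℂ) := by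
  induction m generalizing Q with
  | zero => simp
  | succ m ih =>
    rw [Function.iterate_succ_apply, ashOp_single hz, ih, Function.iterate_succ_apply]

lemma ashOp_sum {n : ℕ} (z : Fin n → ℂ) (hz : ∀ j, z j ≠ 0) (Q : Fin n → ℂ[X]) (w : ℂ) :
    ashOp w (fun x : ℤ => ∑ j, z j ^ x * (Q j).eval (x : ℂ)) =
      fun x : ℤ => ∑ j, z j ^ x * (phiOp w (z j) (Q j)).eval (x : ℂ) := by
  funext x
  simp only [ashOp, Finset.mul_sum, ← Finset.sum_sub_distrib]
  refine Finset.sum_congr rfl fun j _ => ?_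
  rw [phiOp_eval, zpow_add_one₀ (hz j)]
  push_cast
  ring

lemma ashOp_sum_iterate {n : ℕ} (z : Fin n → ℂ) (hz : ∀ j, z j ≠ 0)
    (Q : Fin n → ℂ[X]) (w : ℂ) (m : ℕ) :
    (ashOp w)^[m] (fun x : ℤ => ∑ j, z j ^ x * (Q j).eval (x : ℂ)) =
      fun x : ℤ => ∑ j, z j ^ x * ((phiOp w (z j))^[m] (Q j)).eval (x : ℂ) := by
  induction m generalizing Q with
  | zero => simp
  | succ m ih =>
    rw [Function.iterate_succ_apply, ashOp_sum z hz, ih (fun j => phiOp w (z j) (Q j))]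
    simp only [Function.iterate_succ_apply]

def applyBlocks {n : ℕ} (z : Fin n → ℂ) (d : Fin n → ℕ) :
    List (Fin n) → (ℤ → ℂ) → (ℤ → ℂ)
  | [], g => g
  | k :: L, g => applyBlocks z d L ((ashOp (z k))^[d k + 1] g)

lemma isBddFun_applyBlocks {n : ℕ} (z : Fin n → ℂ) (d : Fin n → ℕ)
    (L : List (Fin n)) {g : ℤ → ℂ} (h : isBddFun g) :
    isBddFun (applyBlocks z d L g) := by
  induction L generalizing g with
  | nil => exact h
  | cons k L ih => exact ih (isBddFun_ashOp_iterate h _ _)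

lemma applyBlocks_rep {n : ℕ} (z : Fin n → ℂ) (hz : ∀ j, z j ≠ 0)
    (hzne : ∀ j k : Fin n, j ≠ k → z j ≠ z k) (d : Fin n → ℕ) :
    ∀ (L : List (Fin n)) (Q : Fin n → ℂ[X]), (∀ j, (Q j).natDegree ≤ d j) →
    ∃ Q' : Fin n → ℂ[X],
      (∀ j, (Q' j).natDegree ≤ d j) ∧
      (∀ j ∈ L, Q' j = 0) ∧
      (∀ j, Q j = 0 → Q' j = 0) ∧
      (∀ j, j ∉ L → Q j ≠ 0 → Q' j ≠ 0) ∧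
      applyBlocks z d L (fun x : ℤ => ∑ j, z j ^ x * (Q j).eval (x : ℂ)) =
        fun x : ℤ => ∑ j, z j ^ x * (Q' j).eval (x : ℂ) := by
  intro L
  induction L with
  | nil =>
    intro Q hQ
    exact ⟨Q, hQ, by simp, fun j h => h, fun j _ h => h, rfl⟩
  | cons k L ih =>
    intro Q hQ
    set Q₁ : Fin n → ℂ[X] := fun j => (phiOp (z k) (z j))^[d k + 1] (Q j) with hQ₁def
    have h1 : ∀ j, (Q₁ j).natDegree ≤ d j :=
      fun j => (phiOp_iterate_natDegree_le _ _ _ _).trans (hQ j)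
    obtain ⟨Q', ha, hb, hc0, hc1, he⟩ := ih Q₁ h1
    refine ⟨Q', ha, ?_, ?_, ?_, ?_⟩
    · intro j hj
      rcases List.mem_cons.mp hj with h | h
      · subst h
        apply hc0
        exact phiOp_self_kill (z j) (d j) (Q j) (hQ j)
      · exact hb j h
    · intro j hQj
      apply hc0
      rw [hQ₁def]
      simp only [hQj]
      exact phiOp_iterate_zero _ _ _
    · intro j hj hQj
      have hjk : j ≠ k := fun h => hj (h ▸ (List.mem_cons_self : k ∈ k :: L))
      have hne : z k ≠ z j := hzne k j (Ne.symm hjk)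
      exact hc1 j (fun h => hj (List.mem_cons_of_mem _ h))
        (phiOp_iterate_ne_zero hne (d k + 1) hQj)
    · show applyBlocks z d L ((ashOp (z k))^[d k + 1] _) = _
      rw [ashOp_sum_iterate z hz Q (z k) (d k + 1), he]

lemma abs_eq_one_of_bdd :
    ∀ (m : ℕ) (Q : ℂ[X]), Q.natDegree ≤ m → Q ≠ 0 → ∀ z : ℂ, z ≠ 0 →
    (∃ C : ℝ, ∀ x : ℤ, ‖z ^ x * Q.eval (x : ℂ)‖ ≤ C) →
    ‖z‖ = 1 := by
  intro m
  induction m with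
  | zero =>
    rintro Q hd hQ z hz ⟨C, hC⟩
    obtain ⟨c, rfl⟩ := Polynomial.natDegree_eq_zero.mp (Nat.le_zero.mp hd)
    have hc : c ≠ 0 := fun h => hQ (by rw [h]; simp)
    have hc' : 0 < ‖c‖ := norm_pos_iff.mpr hc
    have ha0 : 0 < ‖z‖ := norm_pos_iff.mpr hz
    have key : ∀ x : ℤ, ‖z‖ ^ x * ‖c‖ ≤ C := by
      intro x
      have hx := hC x
      rwa [norm_mul, norm_zpow, eval_C] at hx
    rcases lt_trichotomy ‖z‖ 1 with h | h | h
    · exfalso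
      have hinv : 1 < ‖z‖⁻¹ := by
        nlinarith [mul_inv_cancel₀ ha0.ne', inv_pos.mpr ha0]
      obtain ⟨k, hk⟩ := pow_unbounded_of_one_lt (C / ‖c‖) hinv
      have h1 := key (-(k : ℤ))
      rw [zpow_neg, zpow_natCast, ← inv_pow] at h1
      have h2 : C < ‖z‖⁻¹ ^ k * ‖c‖ := (div_lt_iff₀ hc').mp hk
      linarith
    · exact h
    · exfalso
      obtain ⟨k, hk⟩ := pow_unbounded_of_one_lt (C / ‖c‖) h
      have h1 := key (k : ℤ)
      rw [zpow_natCast] at h1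
      have h2 : C < ‖z‖ ^ k * ‖c‖ := (div_lt_iff₀ hc').mp hk
      linarith
  | succ m ih =>
    intro Q hd hQ z hz hb
    by_cases h0 : Q.natDegree ≤ m
    · exact ih Q h0 hQ z hz hb
    · have hdeg : Q.natDegree ≠ 0 := by omega
      have hlt : (phiOp z z Q).natDegree < Q.natDegree := phiOp_self_natDegree_lt hdeg
      have hRne : phiOp z z Q ≠ 0 := phiOp_self_ne_zero hz hdeg
      apply ih (phiOp z z Q) (by omega) hRne z hz
      have hb2 : isBddFun (ashOp z (fun x : ℤ => z ^ x * Q.eval (x : ℂ))) :=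
        isBddFun_ashOp hb z
      rwa [ashOp_single hz Q z] at hb2

end Stmt6Aux

theorem stmt_6 (n : ℕ) (hn : 1 ≤ n) (lam : Fin n → ℂ)
    (hlam : ∀ i j : Fin n, i ≠ j →
      ¬∃ k : ℤ, lam i - lam j = 2 * Real.pi * Complex.I * k)
    (P : Fin n → Polynomial ℂ) (hP : ∀ i, P i ≠ 0)
    (hbd : ∃ C : ℝ, ∀ x : ℤ,
      ‖∑ i, Complex.exp (lam i * x) * (P i).eval (x : ℂ)‖ ≤ C) :
    ∀ i, (lam i).re = 0 := by
  intro i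
  set z : Fin n → ℂ := fun j => Complex.exp (lam j) with hzdef
  have hz0 : ∀ j, z j ≠ 0 := fun j => Complex.exp_ne_zero _
  have hzne : ∀ j k : Fin n, j ≠ k → z j ≠ z k := by
    intro j k hjk h
    rcases Complex.exp_eq_exp_iff_exists_int.mp h with ⟨m, hm⟩
    exact hlam j k hjk ⟨m, by rw [sub_eq_iff_eq_add]; rw [hm]; ring⟩
  obtain ⟨C, hC⟩ := hbd
  have hrep : ∀ x : ℤ, (∑ j, Complex.exp (lam j * x) * (P j).eval (x : ℂ)) =
      ∑ j, z j ^ x * (P j).eval (x : ℂ) := by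
    intro x
    refine Finset.sum_congr rfl fun j _ => ?_
    rw [mul_comm (lam j) (x : ℂ), Complex.exp_int_mul]
  set L := (Finset.univ.erase i).toList with hL
  have hmem : ∀ j, j ∈ L ↔ j ≠ i := by
    intro j
    rw [hL, Finset.mem_toList, Finset.mem_erase]
    simp
  obtain ⟨Q', hdeg', hzero', hpres0, hpres, heq⟩ :=
    applyBlocks_rep z hz0 hzne (fun j => (P j).natDegree) L P (fun j => le_rfl)
  have hbddf : isBddFun (fun x : ℤ => ∑ j, z j ^ x * (P j).eval (x : ℂ)) := by
    refine ⟨C, fun x => ?_⟩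
    show ‖∑ j, z j ^ x * (P j).eval (x : ℂ)‖ ≤ C
    rw [← hrep x]
    exact hC x
  have hbdd2 := isBddFun_applyBlocks z (fun j => (P j).natDegree) L hbddf
  rw [heq] at hbdd2
  have hQ'i : Q' i ≠ 0 := hpres i (fun h => ((hmem i).mp h) rfl) (hP i)
  have hsum : (fun x : ℤ => ∑ j, z j ^ x * (Q' j).eval (x : ℂ)) =
      fun x : ℤ => z i ^ x * (Q' i).eval (x : ℂ) := by
    funext x
    apply Finset.sum_eq_single
    · intro j _ hj
      rw [hzero' j ((hmem j).mpr hj)]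
      simp
    · simp
  rw [hsum] at hbdd2
  have habs : ‖z i‖ = 1 :=
    abs_eq_one_of_bdd (Q' i).natDegree (Q' i) le_rfl hQ'i (z i) (hz0 i) hbdd2
  have hexp : Real.exp ((lam i).re) = 1 := by
    rwa [hzdef, Complex.norm_exp] at habs
  have hlog := congrArg Real.log hexp
  rwa [Real.log_exp, Real.log_one] at hlog
end

section
/- Let Φ be a crystallographic root system in a finite-dimensional real inner product space V with base Δ. Let S ⊆ Δ and β ∈ Δ ∖ S, and let α be the orthogonal projection of β onto the orthogonal complement of the linear span of S. Then α is a linear combination of the elements of Δ with all coefficients nonnegative. -/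
open scoped RealInnerProductSpace

/-- Uniqueness of coefficients for a linearly independent finset. -/
lemma coeff_unique {V : Type*} [NormedAddCommGroup V] [InnerProductSpace ℝ V]
    (Δ : Finset V) (hli : LinearIndependent ℝ (fun x : Δ => (x : V)))
    (f g : V → ℝ) (h : ∑ v ∈ Δ, f v • v = ∑ v ∈ Δ, g v • v) :
    ∀ v ∈ Δ, f v = g v := by
  have hzero : ∑ v ∈ Δ, (f v - g v) • v = 0 := by
    simp only [sub_smul, Finset.sum_sub_distrib, h, sub_self]
  have hz : ∑ x : Δ, (f (x : V) - g (x : V)) • (x : V) = 0 := by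
    rw [← Finset.sum_attach Δ (fun v => (f v - g v) • v)] at hzero
    simpa using hzero
  have h1 := (Fintype.linearIndependent_iff.mp hli) (fun x : Δ => f (x : V) - g (x : V)) hz
  intro v hv
  have h2 : f v - g v = 0 := h1 ⟨v, hv⟩
  linarith

/-- Distinct simple roots have nonpositive inner product. -/
lemma simple_obtuse {V : Type*} [NormedAddCommGroup V] [InnerProductSpace ℝ V]
    (Φ : Set V) (h0 : (0 : V) ∉ Φ)
    (hrefl : ∀ α ∈ Φ, ∀ β ∈ Φ, β - (2 * ⟪β, α⟫ / ⟪α, α⟫) • α ∈ Φ)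
    (hcrys : ∀ α ∈ Φ, ∀ β ∈ Φ, ∃ k : ℤ, 2 * ⟪β, α⟫ / ⟪α, α⟫ = (k : ℝ))
    (Δ : Finset V) (hΔΦ : (Δ : Set V) ⊆ Φ)
    (hli : LinearIndependent ℝ (fun x : Δ => (x : V)))
    (hbase : ∀ γ ∈ Φ, ∃ c : V → ℤ,
      γ = ∑ v ∈ Δ, (c v : ℝ) • v ∧ ((∀ v ∈ Δ, 0 ≤ c v) ∨ (∀ v ∈ Δ, c v ≤ 0)))
    (s t : V) (hs : s ∈ Δ) (ht : t ∈ Δ) (hst : s ≠ t) : ⟪s, t⟫ ≤ 0 := by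
  classical
  by_contra hpos
  push_neg at hpos
  have hsΦ : s ∈ Φ := hΔΦ hs
  have htΦ : t ∈ Φ := hΔΦ ht
  have ht0 : t ≠ 0 := fun h => h0 (h ▸ htΦ)
  have htt : (0 : ℝ) < ⟪t, t⟫ := not_le.mp (fun h => ht0 (real_inner_self_nonpos.mp h))
  obtain ⟨k, hk⟩ := hcrys t htΦ s hsΦ
  have hr : (0 : ℝ) < 2 * ⟪s, t⟫ / ⟪t, t⟫ := by positivity
  have hkpos : (0 : ℝ) < (k : ℝ) := hk ▸ hr
  have hk1 : 1 ≤ k := by exact_mod_cast hkpos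
  have hγ : s - (2 * ⟪s, t⟫ / ⟪t, t⟫) • t ∈ Φ := hrefl t htΦ s hsΦ
  rw [hk] at hγ
  obtain ⟨c, hc, hsign⟩ := hbase _ hγ
  -- explicit coefficients for s - k • t
  set d : V → ℝ := fun v => if v = s then 1 else if v = t then -(k : ℝ) else 0 with hd
  have hdsum : s - (k : ℝ) • t = ∑ v ∈ Δ, d v • v := by
    have hsub : ({s, t} : Finset V) ⊆ Δ := by
      intro v hv
      simp only [Finset.mem_insert, Finset.mem_singleton] at hv
      rcases hv with rfl | rfl <;> assumption
    rw [← Finset.sum_subset hsub (by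
      intro v _ hv
      simp only [Finset.mem_insert, Finset.mem_singleton, not_or] at hv
      simp [hd, hv.1, hv.2])]
    rw [Finset.sum_pair hst]
    simp [hd, hst, hst.symm, sub_eq_add_neg]
  have heq : ∀ v ∈ Δ, (fun v => (c v : ℝ)) v = d v := by
    apply coeff_unique Δ hli
    rw [← hc, ← hdsum]
  have hcs : (c s : ℝ) = 1 := by simpa [hd] using heq s hs
  have hct : (c t : ℝ) = -(k : ℝ) := by simpa [hd, hst.symm] using heq t ht
  rcases hsign with hall | hall
  · have := hall t ht
    have : (0 : ℝ) ≤ (c t : ℝ) := by exact_mod_cast this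
    rw [hct] at this
    linarith
  · have := hall s hs
    have : (c s : ℝ) ≤ 0 := by exact_mod_cast this
    rw [hcs] at this
    linarith

/-- The orthogonal projection of a simple root `β ∉ S` onto the orthogonal complement of
`span S` is a nonnegative linear combination of the simple roots. -/
theorem stmt_7 {V : Type*} [NormedAddCommGroup V] [InnerProductSpace ℝ V]
    [FiniteDimensional ℝ V]
    -- `Φ` is a crystallographic root system
    (Φ : Set V) (hfin : Φ.Finite) (h0 : (0 : V) ∉ Φ)
    (hrefl : ∀ α ∈ Φ, ∀ β ∈ Φ, β - (2 * ⟪β, α⟫ / ⟪α, α⟫) • α ∈ Φ)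
    (hcrys : ∀ α ∈ Φ, ∀ β ∈ Φ, ∃ k : ℤ, 2 * ⟪β, α⟫ / ⟪α, α⟫ = (k : ℝ))
    -- with base `Δ`
    (Δ : Finset V) (hΔΦ : (Δ : Set V) ⊆ Φ)
    (hli : LinearIndependent ℝ (fun x : Δ => (x : V)))
    (hbase : ∀ γ ∈ Φ, ∃ c : V → ℤ,
      γ = ∑ v ∈ Δ, (c v : ℝ) • v ∧ ((∀ v ∈ Δ, 0 ≤ c v) ∨ (∀ v ∈ Δ, c v ≤ 0)))
    (S : Finset V) (hS : S ⊆ Δ) (β : V) (hβΔ : β ∈ Δ) (hβS : β ∉ S)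
    (α : V)
    (hα : α = (Submodule.orthogonalProjectionOnto (Submodule.span ℝ (S : Set V))ᗮ β : V)) :
    ∃ c : V → ℝ, (∀ v ∈ Δ, 0 ≤ c v) ∧ α = ∑ v ∈ Δ, c v • v := by
  classical
  have obtuse := simple_obtuse Φ h0 hrefl hcrys Δ hΔΦ hli hbase
  set K := Submodule.span ℝ (S : Set V) with hK
  set p : V := (Submodule.orthogonalProjectionOnto K β : V) with hp
  have hαval : α = β - p := by rw [hα, ← Submodule.starProjection_apply, Submodule.starProjection_orthogonal_val,
    Submodule.starProjection_apply]
  have hαmem : α ∈ Kᗮ := by rw [hα]; exact SetLike.coe_mem _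
  obtain ⟨f, -, hf⟩ := Submodule.mem_span_finset.mp (SetLike.coe_mem (Submodule.orthogonalProjectionOnto K β))
  -- hf : ∑ v ∈ S, f v • v = p
  set P := S.filter (fun v => 0 < f v) with hP
  set N := S.filter (fun v => ¬ 0 < f v) with hN
  set q : V := ∑ v ∈ P, f v • v with hq
  set r : V := ∑ v ∈ N, f v • v with hr
  have hqr : q + r = p := by
    rw [hq, hr, hP, hN, Finset.sum_filter_add_sum_filter_not S (fun v => 0 < f v)
      (fun v => f v • v)]
    exact hf
  have hmemK : ∀ v ∈ S, v ∈ K := fun v hv => Submodule.subset_span hv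
  have hqK : q ∈ K := Submodule.sum_mem _ fun v hv =>
    Submodule.smul_mem _ _ (hmemK v (Finset.mem_filter.mp hv).1)
  -- ⟪α, q⟫ = 0
  have hαq : ⟪α, q⟫ = 0 := by
    rw [real_inner_comm]
    exact (Submodule.mem_orthogonal K α).mp hαmem q hqK
  have hβq : ⟪β, q⟫ = ⟪p, q⟫ := by
    have : ⟪β - p, q⟫ = 0 := by rw [← hαval]; exact hαq
    rw [inner_sub_left] at this
    linarith
  -- ⟪β, q⟫ ≤ 0
  have hβq_le : ⟪β, q⟫ ≤ 0 := by
    rw [hq, inner_sum]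
    apply Finset.sum_nonpos
    intro v hv
    obtain ⟨hvS, hvpos⟩ := Finset.mem_filter.mp hv
    rw [real_inner_smul_right]
    have hvβ : β ≠ v := fun h => hβS (h ▸ hvS)
    have := obtuse β v hβΔ (hS hvS) hvβ
    exact mul_nonpos_of_nonneg_of_nonpos (le_of_lt hvpos) this |>.trans_eq (by ring)
  -- ⟪r, q⟫ ≥ 0
  have hrq : 0 ≤ ⟪r, q⟫ := by
    rw [hr, sum_inner]
    apply Finset.sum_nonneg
    intro v hv
    obtain ⟨hvS, hvneg⟩ := Finset.mem_filter.mp hv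
    rw [real_inner_smul_left, hq, inner_sum]
    rw [Finset.mul_sum]
    apply Finset.sum_nonneg
    intro w hw
    obtain ⟨hwS, hwpos⟩ := Finset.mem_filter.mp hw
    rw [real_inner_smul_right]
    have hvw : v ≠ w := fun h => hvneg (h ▸ hwpos)
    have hin := obtuse v w (hS hvS) (hS hwS) hvw
    have hfv : f v ≤ 0 := not_lt.mp hvneg
    have h1 : f w * ⟪v, w⟫ ≤ 0 := mul_nonpos_of_nonneg_of_nonpos hwpos.le hin
    nlinarith [mul_nonneg (neg_nonneg.mpr hfv) (neg_nonneg.mpr h1)]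
  -- hence q = 0
  have hqq : ⟪q, q⟫ ≤ 0 := by
    have : ⟪p, q⟫ = ⟪q, q⟫ + ⟪r, q⟫ := by
      rw [← hqr, inner_add_left]
    linarith [hβq_le, hβq ▸ hβq_le]
  have hq0 : q = 0 := (@real_inner_self_nonpos V _ _ q).mp hqq
  have hpr : p = r := by rw [← hqr, hq0, zero_add]
  -- final coefficients
  refine ⟨fun v => if v = β then 1 else if v ∈ N then -f v else 0, ?_, ?_⟩
  · intro v _
    by_cases h1 : v = β
    · simp [h1]
    · by_cases h2 : v ∈ N
      · simp only [h1, if_false, h2, if_true]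
        have := (Finset.mem_filter.mp h2).2
        linarith [not_lt.mp this]
      · simp [h1, h2]
  · have hβN : β ∉ N := fun h => hβS (Finset.mem_filter.mp h).1
    have hsub : insert β N ⊆ Δ := by
      intro v hv
      rcases Finset.mem_insert.mp hv with rfl | hv
      · exact hβΔ
      · exact hS (Finset.mem_filter.mp hv).1
    rw [← Finset.sum_subset hsub (by
      intro v _ hv
      simp only [Finset.mem_insert, not_or] at hv
      simp [hv.1, hv.2])]
    rw [Finset.sum_insert hβN]
    have hNsum : ∑ v ∈ N, (if v = β then (1:ℝ) else if v ∈ N then -f v else 0) • v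
        = -r := by
      rw [hr, ← Finset.sum_neg_distrib]
      apply Finset.sum_congr rfl
      intro v hv
      have hvβ : v ≠ β := fun h => hβN (h ▸ hv)
      simp [hvβ, hv, neg_smul]
    rw [hNsum]
    rw [hαval, hpr, sub_eq_add_neg]
    norm_num
end
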